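/- arXiv:1011.6584 — 8 statements merged into one kernel-verified Lean document; each statement's English description precedes it below -/
import Mathlib

section
/- Let H be an infinite-dimensional separable complex Hilbert space and let A be a bounded linear operator on H belonging to the class C₊(H). Then: (i) A is a complex symmetric operator with a simple spectrum; and (ii) there exist a conjugation J on H with JAJ = A* and a cyclic vector x₀ of A with Jx₀ = x₀ such that Γ(x₀, Ax₀, …, Aⁿx₀, (A*)ⁿx₀) = 0 for every n ≥ 1. -/
open scoped ComplexConjugate

noncomputable section

variable {H : Type*} [NormedAddCommGroup H] [InnerProductSpace ℂ H]

/-- A conjugation on a complex Hilbert space `H`: an antilinear involution that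
reverses the inner product (Mathlib's inner product is linear in the second argument,
so the paper's `(Jx, Jy) = (y, x)` becomes `⟪Jx, Jy⟫ = ⟪y, x⟫`). -/
def IsConjugation (J : H → H) : Prop :=
  (∀ x y : H, J (x + y) = J x + J y) ∧
  (∀ (c : ℂ) (x : H), J (c • x) = conj c • J x) ∧
  (∀ x : H, J (J x) = x) ∧
  (∀ x y : H, (inner ℂ (J x) (J y) : ℂ) = inner ℂ y x)

/-- `x₀` is a cyclic vector for `A`: the span of the orbit `{Aᵏx₀}` is dense. -/
def IsCyclicVector (A : H →L[ℂ] H) (x₀ : H) : Prop :=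
  Dense ((Submodule.span ℂ (Set.range fun k : ℕ => (A ^ k) x₀) : Submodule ℂ H) : Set H)

/-- The Gram determinant `Γ(y₀,…,y_{n-1}) = det((y_k, y_l))`, where the paper's
inner product `(y_k, y_l)` (linear in the first argument) is `⟪y_l, y_k⟫` in Mathlib. -/
def gramDet {n : ℕ} (y : Fin n → H) : ℂ :=
  Matrix.det (Matrix.of fun k l : Fin n => (inner ℂ (y l) (y k) : ℂ))

/-- The condition `Γ(x₀, Ax₀, …, Aⁿx₀, (A*)ⁿx₀) = 0` for every `n ≥ 1`. -/
def GammaVanish [CompleteSpace H] (A : H →L[ℂ] H) (x₀ : H) : Prop :=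
  ∀ n : ℕ, 1 ≤ n →
    gramDet (Fin.snoc (fun i : Fin (n + 1) => (A ^ (i : ℕ)) x₀)
      ((ContinuousLinearMap.adjoint A ^ n) x₀)) = 0

/-- The class `M₃⁺` of semi-infinite complex matrices. -/
def MemM3plus (m : ℕ → ℕ → ℂ) : Prop :=
  (∀ k l : ℕ, 1 < |(k : ℤ) - (l : ℤ)| → m k l = 0) ∧
  (∀ k l : ℕ, m k l = m l k) ∧
  (∀ k : ℕ, m k (k + 1) ≠ 0)

/-- The class `M₃⁻` of semi-infinite complex matrices. -/
def MemM3minus (m : ℕ → ℕ → ℂ) : Prop :=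
  (∀ k l : ℕ, 1 < |(k : ℤ) - (l : ℤ)| → m k l = 0) ∧
  (∀ k l : ℕ, m k l = - m l k) ∧
  (∀ k : ℕ, m k (k + 1) ≠ 0)

/-- The matrix of `A` in the orthonormal basis `e`: the paper's
`m_{k,l} = (Ae_l, e_k)` is `⟪e_k, Ae_l⟫` in Mathlib's convention. -/
def matrixIn (A : H →L[ℂ] H) (e : HilbertBasis ℕ ℂ H) : ℕ → ℕ → ℂ :=
  fun k l => (inner ℂ (e k) (A (e l)) : ℂ)

/-- The class `C₊(H)`. -/
def MemCplus (A : H →L[ℂ] H) : Prop :=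
  ∃ e : HilbertBasis ℕ ℂ H, MemM3plus (matrixIn A e)

/-- The class `C₋(H)`. -/
def MemCminus (A : H →L[ℂ] H) : Prop :=
  ∃ e : HilbertBasis ℕ ℂ H, MemM3minus (matrixIn A e)


section Aux
set_option linter.unusedSectionVars false
set_option maxHeartbeats 1000000

local notation "⟪" x ", " y "⟫" => @inner ℂ _ _ x y

variable [CompleteSpace H]

lemma myext (e : HilbertBasis ℕ ℂ H) {x y : H} (h : ∀ k, ⟪e k, x⟫ = ⟪e k, y⟫) : x = y := by
  apply e.repr.injective
  ext k
  simpa [e.repr_apply_apply] using h k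

def Jmap (e : HilbertBasis ℕ ℂ H) : H → H := fun x => e.repr.symm (star (e.repr x))

lemma inner_Jmap (e : HilbertBasis ℕ ℂ H) (x : H) (k : ℕ) :
    ⟪e k, Jmap e x⟫ = conj ⟪e k, x⟫ := by
  rw [← e.repr_apply_apply, Jmap, LinearIsometryEquiv.apply_symm_apply, lp.star_apply,
    e.repr_apply_apply]
  rfl

lemma Jmap_add (e : HilbertBasis ℕ ℂ H) (x y : H) :
    Jmap e (x + y) = Jmap e x + Jmap e y := by
  simp [Jmap, map_add, star_add]

lemma Jmap_smul (e : HilbertBasis ℕ ℂ H) (c : ℂ) (x : H) :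
    Jmap e (c • x) = conj c • Jmap e x := by
  simp only [Jmap, map_smul, star_smul, RCLike.star_def]

lemma Jmap_invol (e : HilbertBasis ℕ ℂ H) (x : H) : Jmap e (Jmap e x) = x := by
  simp [Jmap, LinearIsometryEquiv.apply_symm_apply, star_star]

lemma Jmap_inner (e : HilbertBasis ℕ ℂ H) (x y : H) :
    ⟪Jmap e x, Jmap e y⟫ = ⟪y, x⟫ := by
  rw [← e.tsum_inner_mul_inner (Jmap e x) (Jmap e y), ← e.tsum_inner_mul_inner y x]
  congr 1
  ext k
  have h1 : ⟪Jmap e x, e k⟫ = ⟪e k, x⟫ := by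
    rw [← inner_conj_symm, inner_Jmap]; simp
  rw [h1, inner_Jmap, ← inner_conj_symm y (e k)]
  ring

lemma isConj (e : HilbertBasis ℕ ℂ H) :
    (∀ x y : H, Jmap e (x + y) = Jmap e x + Jmap e y) ∧
    (∀ (c : ℂ) (x : H), Jmap e (c • x) = conj c • Jmap e x) ∧
    (∀ x : H, Jmap e (Jmap e x) = x) ∧
    (∀ x y : H, ⟪Jmap e x, Jmap e y⟫ = ⟪y, x⟫) :=
  ⟨Jmap_add e, Jmap_smul e, Jmap_invol e, Jmap_inner e⟩

lemma inner_apply_tsum (e : HilbertBasis ℕ ℂ H) (B : H →L[ℂ] H) (k : ℕ) (y : H) :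
    ⟪e k, B y⟫ = ∑' l, ⟪e k, B (e l)⟫ * ⟪e l, y⟫ := by
  have h := e.tsum_inner_mul_inner ((ContinuousLinearMap.adjoint B) (e k)) y
  rw [ContinuousLinearMap.adjoint_inner_left] at h
  rw [← h]
  congr 1
  ext l
  rw [ContinuousLinearMap.adjoint_inner_left]

lemma Jmap_conj_eq_adjoint (e : HilbertBasis ℕ ℂ H) (A : H →L[ℂ] H)
    (hsym : ∀ k l : ℕ, ⟪e k, A (e l)⟫ = ⟪e l, A (e k)⟫) (x : H) :
    Jmap e (A (Jmap e x)) = ContinuousLinearMap.adjoint A x := by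
  apply myext e
  intro k
  rw [inner_Jmap, inner_apply_tsum e A k, inner_apply_tsum e (ContinuousLinearMap.adjoint A) k]
  rw [starRingEnd_apply, tsum_star]
  congr 1
  ext l
  rw [inner_Jmap, ContinuousLinearMap.adjoint_inner_right]
  show star (⟪e k, A (e l)⟫ * conj ⟪e l, x⟫) = ⟪A (e k), e l⟫ * ⟪e l, x⟫
  rw [← inner_conj_symm (A (e k)) (e l), ← hsym k l]
  simp only [star_mul', starRingEnd_apply, star_star]

def Wspan (e : HilbertBasis ℕ ℂ H) (n : ℕ) : Submodule ℂ H :=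
  Submodule.span ℂ (e '' {i : ℕ | i ≤ n})

lemma Wspan_mono (e : HilbertBasis ℕ ℂ H) {m n : ℕ} (h : m ≤ n) : Wspan e m ≤ Wspan e n :=
  Submodule.span_mono (Set.image_mono fun _ hi => le_trans hi h)

lemma coeff_zero_of_mem (e : HilbertBasis ℕ ℂ H) {n : ℕ} {v : H} (hv : v ∈ Wspan e n)
    {k : ℕ} (hk : n < k) : ⟪e k, v⟫ = 0 := by
  induction hv using Submodule.span_induction with
  | mem x hx =>
    obtain ⟨i, hi, rfl⟩ := hx
    simp only [Set.mem_setOf_eq] at hi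
    exact e.orthonormal.2 (by omega : k ≠ i)
  | zero => exact inner_zero_right _
  | add u w _ _ hu hw => rw [inner_add_right, hu, hw, add_zero]
  | smul c u _ hu => rw [inner_smul_right, hu, mul_zero]

lemma eq_sum_of_coeff_zero (e : HilbertBasis ℕ ℂ H) {n : ℕ} {v : H}
    (h : ∀ k, n < k → ⟪e k, v⟫ = 0) :
    v = ∑ i ∈ Finset.range (n + 1), ⟪e i, v⟫ • e i := by
  have hite : ∀ i j : ℕ, ⟪e i, e j⟫ = if i = j then (1:ℂ) else 0 :=
    orthonormal_iff_ite.mp e.orthonormal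
  apply myext e
  intro k
  rw [inner_sum]
  simp only [inner_smul_right, hite, mul_ite, mul_one, mul_zero]
  rw [Finset.sum_ite_eq (Finset.range (n + 1)) k (fun i => ⟪e i, v⟫)]
  by_cases hk : k ∈ Finset.range (n + 1)
  · rw [if_pos hk]
  · rw [if_neg hk, h k (by simpa using hk)]

lemma mem_Wspan_of_coeff_zero (e : HilbertBasis ℕ ℂ H) {n : ℕ} {v : H}
    (h : ∀ k, n < k → ⟪e k, v⟫ = 0) : v ∈ Wspan e n := by
  rw [eq_sum_of_coeff_zero e h]
  refine Submodule.sum_mem _ fun i hi => Submodule.smul_mem _ _ (Submodule.subset_span ?_)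
  exact ⟨i, Nat.lt_succ_iff.mp (Finset.mem_range.mp hi), rfl⟩

lemma apply_mem_Wspan (e : HilbertBasis ℕ ℂ H) (B : H →L[ℂ] H)
    (hB : ∀ k l : ℕ, l + 1 < k → ⟪e k, B (e l)⟫ = 0) {n : ℕ} {v : H}
    (hv : v ∈ Wspan e n) : B v ∈ Wspan e (n + 1) := by
  induction hv using Submodule.span_induction with
  | mem x hx =>
    obtain ⟨i, hi, rfl⟩ := hx
    refine Wspan_mono e (by simpa using hi : i + 1 ≤ n + 1)
      (mem_Wspan_of_coeff_zero e fun k hk => hB k i (by omega))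
  | zero => simpa using Submodule.zero_mem _
  | add u w _ _ hu hw => simpa [map_add] using Submodule.add_mem _ hu hw
  | smul c u _ hu => simpa [map_smul] using Submodule.smul_mem _ c hu

lemma pow_mem_Wspan (e : HilbertBasis ℕ ℂ H) (B : H →L[ℂ] H)
    (hB : ∀ k l : ℕ, l + 1 < k → ⟪e k, B (e l)⟫ = 0) (n : ℕ) :
    (B ^ n) (e 0) ∈ Wspan e n := by
  induction n with
  | zero => exact Submodule.subset_span ⟨0, by simp, rfl⟩
  | succ n ih =>
    have : (B ^ (n + 1)) (e 0) = B ((B ^ n) (e 0)) := by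
      rw [pow_succ']; rfl
    rw [this]
    exact apply_mem_Wspan e B hB ih

lemma coeff_apply (e : HilbertBasis ℕ ℂ H) (B : H →L[ℂ] H)
    (hB : ∀ k l : ℕ, l + 1 < k → ⟪e k, B (e l)⟫ = 0) {n : ℕ} {v : H}
    (hv : v ∈ Wspan e n) :
    ⟪e (n + 1), B v⟫ = ⟪e (n + 1), B (e n)⟫ * ⟪e n, v⟫ := by
  induction hv using Submodule.span_induction with
  | mem x hx =>
    obtain ⟨i, hi, rfl⟩ := hx
    simp only [Set.mem_setOf_eq] at hi
    rcases eq_or_lt_of_le hi with rfl | hlt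
    · have hite : ∀ i j : ℕ, ⟪e i, e j⟫ = if i = j then (1:ℂ) else 0 :=
        orthonormal_iff_ite.mp e.orthonormal
      rw [hite]
      simp
    · rw [hB (n + 1) i (by omega), e.orthonormal.2 (by omega : n ≠ i), mul_zero]
  | zero => simp
  | add u w _ _ hu hw => rw [map_add B, inner_add_right, inner_add_right, hu, hw]; ring
  | smul c u _ hu => rw [map_smul, inner_smul_right, inner_smul_right, hu]; ring

lemma coeff_pow_ne_zero (e : HilbertBasis ℕ ℂ H) (B : H →L[ℂ] H)
    (hB : ∀ k l : ℕ, l + 1 < k → ⟪e k, B (e l)⟫ = 0)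
    (hnz : ∀ n : ℕ, ⟪e (n + 1), B (e n)⟫ ≠ 0) (n : ℕ) :
    ⟪e n, (B ^ n) (e 0)⟫ ≠ 0 := by
  induction n with
  | zero =>
    have hite : ∀ i j : ℕ, ⟪e i, e j⟫ = if i = j then (1:ℂ) else 0 :=
      orthonormal_iff_ite.mp e.orthonormal
    simp [hite, e.orthonormal.ne_zero 0]
  | succ n ih =>
    have hstep : (B ^ (n + 1)) (e 0) = B ((B ^ n) (e 0)) := by rw [pow_succ']; rfl
    rw [hstep, coeff_apply e B hB (pow_mem_Wspan e B hB n)]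
    exact mul_ne_zero (hnz n) ih

lemma cyclic_of_tridiag (e : HilbertBasis ℕ ℂ H) (B : H →L[ℂ] H)
    (hB : ∀ k l : ℕ, l + 1 < k → ⟪e k, B (e l)⟫ = 0)
    (hnz : ∀ n : ℕ, ⟪e (n + 1), B (e n)⟫ ≠ 0) :
    Dense ((Submodule.span ℂ (Set.range fun k : ℕ => (B ^ k) (e 0)) : Submodule ℂ H) : Set H) := by
  set S : Submodule ℂ H := Submodule.span ℂ (Set.range fun k : ℕ => (B ^ k) (e 0)) with hS
  have key : ∀ n : ℕ, e n ∈ S := by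
    intro n
    induction n using Nat.strong_induction_on with
    | _ n ih =>
      have hmem : (B ^ n) (e 0) ∈ S :=
        Submodule.subset_span ⟨n, rfl⟩
      have hexp : (B ^ n) (e 0) =
          ∑ i ∈ Finset.range (n + 1), ⟪e i, (B ^ n) (e 0)⟫ • e i :=
        eq_sum_of_coeff_zero e fun k hk => coeff_zero_of_mem e (pow_mem_Wspan e B hB n) hk
      have hc : ⟪e n, (B ^ n) (e 0)⟫ ≠ 0 := coeff_pow_ne_zero e B hB hnz n
      have hrest : ∑ i ∈ Finset.range n, ⟪e i, (B ^ n) (e 0)⟫ • e i ∈ S :=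
        Submodule.sum_mem _ fun i hi => Submodule.smul_mem _ _ (ih i (Finset.mem_range.mp hi))
      have hsm : ⟪e n, (B ^ n) (e 0)⟫ • e n ∈ S := by
        have heq : ⟪e n, (B ^ n) (e 0)⟫ • e n =
            (B ^ n) (e 0) - ∑ i ∈ Finset.range n, ⟪e i, (B ^ n) (e 0)⟫ • e i := by
          apply eq_sub_of_add_eq
          rw [add_comm, ← Finset.sum_range_succ (fun i => ⟪e i, (B ^ n) (e 0)⟫ • e i) n]
          exact hexp.symm
        rw [heq]
        exact Submodule.sub_mem _ hmem hrest
      have := Submodule.smul_mem S (⟪e n, (B ^ n) (e 0)⟫)⁻¹ hsm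
      rwa [smul_smul, inv_mul_cancel₀ hc, one_smul] at this
  have hle : Submodule.span ℂ (Set.range (e : ℕ → H)) ≤ S :=
    Submodule.span_le.mpr (by rintro y ⟨n, rfl⟩; exact key n)
  rw [Submodule.dense_iff_topologicalClosure_eq_top]
  exact top_unique (e.dense_span ▸ Submodule.topologicalClosure_mono hle)

lemma gram_zero (e : HilbertBasis ℕ ℂ H) {n m : ℕ} (hnm : n + 1 < m) (y : Fin m → H)
    (hy : ∀ i, y i ∈ Wspan e n) :
    Matrix.det (Matrix.of fun k l : Fin m => ⟪y l, y k⟫) = 0 := by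
  have hnotind : ¬ LinearIndependent ℂ y := by
    intro hind
    classical
    set w : Finset H := (Finset.range (n + 1)).image e with hw
    have hsub : Set.range y ⊆ (Submodule.span ℂ (w : Set H) : Set H) := by
      rintro _ ⟨i, rfl⟩
      refine Submodule.span_mono ?_ (hy i)
      rintro _ ⟨j, hj, rfl⟩
      simp only [Set.mem_setOf_eq] at hj
      exact Finset.mem_coe.mpr (Finset.mem_image.mpr ⟨j, Finset.mem_range.mpr (by omega), rfl⟩)
    have hcard := linearIndependent_le_span' y hind (w : Set H) hsub
    simp only [Cardinal.mk_fintype, Fintype.card_fin, Finset.coe_sort_coe, Fintype.card_coe,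
      Nat.cast_le] at hcard
    have hwcard : w.card ≤ n + 1 := Finset.card_image_le.trans (by simp)
    omega
  obtain ⟨g, hsum, i0, hg0⟩ := Fintype.not_linearIndependent_iff.mp hnotind
  classical
  apply Matrix.exists_vecMul_eq_zero_iff.mp
  refine ⟨g, fun h => hg0 (by simp [h]), ?_⟩
  funext l
  simp only [Matrix.vecMul, dotProduct, Matrix.of_apply, Pi.zero_apply]
  calc ∑ k, g k * ⟪y l, y k⟫ = ∑ k, ⟪y l, g k • y k⟫ := by
        simp [inner_smul_right]
    _ = ⟪y l, ∑ k, g k • y k⟫ := (inner_sum _ _ _).symm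
    _ = 0 := by rw [hsum, inner_zero_right]


end Aux

/-- If `A ∈ C₊(H)` then `A` is complex symmetric with a simple spectrum,
and there are a conjugation `J` with `JAJ = A*` and a cyclic vector `x₀` with `Jx₀ = x₀`
such that `Γ(x₀, Ax₀, …, Aⁿx₀, (A*)ⁿx₀) = 0` for all `n ≥ 1`. -/
theorem statement0 {H : Type*} [NormedAddCommGroup H] [InnerProductSpace ℂ H]
    [CompleteSpace H] [TopologicalSpace.SeparableSpace H]
    (hinf : ¬ FiniteDimensional ℂ H)
    (A : H →L[ℂ] H) (hA : MemCplus A) :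
    ((∃ J : H → H, IsConjugation J ∧
        ∀ x : H, J (A (J x)) = ContinuousLinearMap.adjoint A x) ∧
      (∃ x₀ : H, IsCyclicVector A x₀)) ∧
    (∃ (J : H → H) (x₀ : H), IsConjugation J ∧
      (∀ x : H, J (A (J x)) = ContinuousLinearMap.adjoint A x) ∧
      IsCyclicVector A x₀ ∧ J x₀ = x₀ ∧ GammaVanish A x₀) := by
  classical
  obtain ⟨e, h0, hsymm, hnz⟩ := hA
  have hB : ∀ k l : ℕ, l + 1 < k → (inner ℂ (e k) (A (e l)) : ℂ) = 0 := fun k l h =>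
    h0 k l (lt_of_lt_of_le (by omega : (1:ℤ) < (k:ℤ) - (l:ℤ)) (le_abs_self _))
  have hB' : ∀ k l : ℕ, l + 1 < k →
      (inner ℂ (e k) ((ContinuousLinearMap.adjoint A) (e l)) : ℂ) = 0 := by
    intro k l h
    rw [ContinuousLinearMap.adjoint_inner_right, ← inner_conj_symm (A (e k)) (e l)]
    have hz : (inner ℂ (e l) (A (e k)) : ℂ) = 0 := by
      refine h0 l k ?_
      rw [abs_sub_comm]
      exact lt_of_lt_of_le (by omega : (1:ℤ) < (k:ℤ) - (l:ℤ)) (le_abs_self _)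
    rw [hz, map_zero]
  have hnz' : ∀ n : ℕ, (inner ℂ (e (n + 1)) (A (e n)) : ℂ) ≠ 0 := by
    intro n
    have h := hnz n
    rw [hsymm n (n + 1)] at h
    exact h
  have hJ : IsConjugation (Jmap e) := ⟨Jmap_add e, Jmap_smul e, Jmap_invol e, Jmap_inner e⟩
  have hJA : ∀ x : H, Jmap e (A (Jmap e x)) = ContinuousLinearMap.adjoint A x :=
    Jmap_conj_eq_adjoint e A (fun k l => hsymm k l)
  have hcyc : IsCyclicVector A (e 0) := cyclic_of_tridiag e A hB hnz'
  have hfix : Jmap e (e 0) = e 0 := by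
    apply myext e
    intro k
    rw [inner_Jmap]
    have hite : ∀ i j : ℕ, (inner ℂ (e i) (e j) : ℂ) = if i = j then 1 else 0 :=
      orthonormal_iff_ite.mp e.orthonormal
    rw [hite]
    split <;> simp
  have hGamma : GammaVanish A (e 0) := by
    intro n hn
    unfold gramDet
    apply gram_zero e (show n + 1 < n + 2 by omega)
    intro i
    refine Fin.lastCases ?_ ?_ i
    · rw [Fin.snoc_last]
      exact pow_mem_Wspan e (ContinuousLinearMap.adjoint A) hB' n
    · intro j
      rw [Fin.snoc_castSucc]
      exact Wspan_mono e (Fin.is_le j) (pow_mem_Wspan e A hB (j : ℕ))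
  exact ⟨⟨⟨Jmap e, hJ, hJA⟩, ⟨e 0, hcyc⟩⟩, Jmap e, e 0, hJ, hJA, hcyc, hfix, hGamma⟩
end
end

section
/- Let H be an infinite-dimensional separable complex Hilbert space and let A be a bounded linear operator on H. Suppose there exist a conjugation J on H with JAJ = A* and a cyclic vector x₀ of A with Jx₀ = x₀ such that Γ(x₀, Ax₀, …, Aⁿx₀, (A*)ⁿx₀) = 0 for every n ≥ 1. Then A belongs to the class C₊(H). -/
open scoped ComplexConjugate

noncomputable section

variable {H : Type*} [NormedAddCommGroup H] [InnerProductSpace ℂ H]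

/-- If there are a conjugation `J` with `JAJ = A*` and a cyclic vector `x₀`
with `Jx₀ = x₀` such that `Γ(x₀, Ax₀, …, Aⁿx₀, (A*)ⁿx₀) = 0` for all `n ≥ 1`,
then `A ∈ C₊(H)`. -/
theorem statement1 {H : Type*} [NormedAddCommGroup H] [InnerProductSpace ℂ H]
    [CompleteSpace H] [TopologicalSpace.SeparableSpace H]
    (hinf : ¬ FiniteDimensional ℂ H)
    (A : H →L[ℂ] H) (J : H → H) (x₀ : H)
    (hJ : IsConjugation J)
    (hJAJ : ∀ x : H, J (A (J x)) = ContinuousLinearMap.adjoint A x)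
    (hcyc : IsCyclicVector A x₀) (hJx₀ : J x₀ = x₀)
    (hΓ : GammaVanish A x₀) :
    MemCplus A := by
  classical
  obtain ⟨Jadd, Jsmul, Jinv, Jinner⟩ := hJ
  have Jzero : J 0 = 0 := by
    have h := Jadd 0 0
    rw [add_zero] at h
    exact (left_eq_add.mp h)
  -- the orbit vectors
  set v : ℕ → H := fun n => (A ^ n) x₀ with hvdef
  have hveq : ∀ n, (A ^ n) x₀ = v n := fun _ => rfl
  set K : ℕ → Submodule ℂ H := fun n => Submodule.span ℂ (v '' Set.Iic n) with hKdef
  have hv0 : v 0 = x₀ := by simp [hvdef]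
  have hAv : ∀ n, A (v n) = v (n + 1) := by
    intro n
    show A ((A ^ n) x₀) = (A ^ (n + 1)) x₀
    rw [pow_succ', ContinuousLinearMap.mul_apply]
  have hKmono : Monotone K := fun a b hab =>
    Submodule.span_mono (Set.image_mono (Set.Iic_subset_Iic.mpr hab))
  have hvK : ∀ i n : ℕ, i ≤ n → v i ∈ K n := fun i n hin =>
    Submodule.subset_span ⟨i, hin, rfl⟩
  -- step 1 : the orbit is linearly independent
  have hC : ∀ n, v n ∉ Submodule.span ℂ (v '' Set.Iio n) := by
    intro n hmem
    set S := Submodule.span ℂ (v '' Set.Iio n) with hS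
    have hstep : ∀ x ∈ S, A x ∈ S := by
      intro x hx
      induction hx using Submodule.span_induction with
      | mem x hxg =>
        obtain ⟨i, hi, rfl⟩ := hxg
        rw [hAv]
        rcases Nat.lt_or_ge (i + 1) n with h | h
        · exact Submodule.subset_span ⟨i + 1, h, rfl⟩
        · have : i + 1 = n := le_antisymm (Nat.succ_le_of_lt hi) h
          rw [this]; exact hmem
      | zero => simp
      | add x y hx hy ihx ihy => rw [map_add]; exact add_mem ihx ihy
      | smul a x hx ih => rw [map_smul]; exact Submodule.smul_mem _ _ ih
    have hall : ∀ m, v m ∈ S := by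
      have h2 : ∀ m, n ≤ m → v m ∈ S := by
        intro m hm
        induction m, hm using Nat.le_induction with
        | base => exact hmem
        | succ m hm ih => rw [← hAv]; exact hstep _ ih
      intro m
      rcases lt_or_ge m n with h | h
      · exact Submodule.subset_span ⟨m, h, rfl⟩
      · exact h2 m h
    have hfd : FiniteDimensional ℂ S := by
      apply FiniteDimensional.span_of_finite
      exact (Set.finite_Iio n).image _
    have hclosed : IsClosed (S : Set H) := Submodule.closed_of_finiteDimensional S
    have hdense : Dense (S : Set H) := by
      have hle : Submodule.span ℂ (Set.range fun k : ℕ => (A ^ k) x₀) ≤ S := by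
        rw [Submodule.span_le]; rintro x ⟨m, rfl⟩; exact hall m
      exact Dense.mono hle hcyc
    have htop : S = ⊤ := by
      have : (S : Set H) = Set.univ := by
        rw [← hclosed.closure_eq]; exact hdense.closure_eq
      exact Submodule.eq_top_iff'.mpr (Set.eq_univ_iff_forall.mp this)
    rw [htop] at hfd
    exact hinf (Submodule.topEquiv.finiteDimensional)
  have hindep : LinearIndependent ℂ v := by
    rw [linearIndependent_iff']
    intro s g hrel i his
    by_contra hgi
    set t := s.filter (fun j => g j ≠ 0) with ht
    have htne : t.Nonempty := ⟨i, Finset.mem_filter.2 ⟨his, hgi⟩⟩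
    set m := t.max' htne with hm
    have hgm : g m ≠ 0 := (Finset.mem_filter.1 (t.max'_mem htne)).2
    have hms : m ∈ s := (Finset.mem_filter.1 (t.max'_mem htne)).1
    apply hC m
    have hrw : g m • v m = - ∑ j ∈ s.erase m, g j • v j := by
      have := Finset.add_sum_erase s (fun j => g j • v j) hms
      rw [hrel] at this
      linear_combination (norm := module) this
    have hsum_mem : (∑ j ∈ s.erase m, g j • v j) ∈ Submodule.span ℂ (v '' Set.Iio m) := by
      apply Submodule.sum_mem
      intro j hj
      by_cases hgj : g j = 0
      · simp [hgj]
      · have hjt : j ∈ t := Finset.mem_filter.2 ⟨Finset.mem_of_mem_erase hj, hgj⟩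
        have hjm : j ≤ m := t.le_max' j hjt
        have hne : j ≠ m := Finset.ne_of_mem_erase hj
        exact Submodule.smul_mem _ _
          (Submodule.subset_span ⟨j, lt_of_le_of_ne hjm hne, rfl⟩)
    have : v m = (g m)⁻¹ • (g m • v m) := by
      rw [smul_smul, inv_mul_cancel₀ hgm, one_smul]
    rw [this, hrw]
    exact Submodule.smul_mem _ _ (neg_mem hsum_mem)
  have hindepF : ∀ n : ℕ, LinearIndependent ℂ (fun i : Fin n => v i) :=
    fun n => hindep.comp _ Fin.val_injective
  -- J on the orbit
  have hJv : ∀ n, J (v n) = ((ContinuousLinearMap.adjoint A) ^ n) x₀ := by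
    intro n
    induction n with
    | zero => simpa [hv0] using hJx₀
    | succ n ih =>
      rw [← hAv n]
      calc J (A (v n)) = J (A (J (J (v n)))) := by rw [Jinv]
        _ = ContinuousLinearMap.adjoint A (J (v n)) := hJAJ _
        _ = ContinuousLinearMap.adjoint A (((ContinuousLinearMap.adjoint A) ^ n) x₀) := by
            rw [ih]
        _ = ((ContinuousLinearMap.adjoint A) ^ (n + 1)) x₀ := by
            rw [pow_succ', ContinuousLinearMap.mul_apply]
  -- step 2 : the Gram condition forces (A*)^n x₀ ∈ K n
  have hgram : ∀ n : ℕ, ((ContinuousLinearMap.adjoint A) ^ n) x₀ ∈ K n := by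
    intro n
    rcases Nat.eq_zero_or_pos n with rfl | hn
    · simpa [hv0] using hvK 0 0 le_rfl
    · have hdet := hΓ n hn
      set y : Fin (n + 2) → H :=
        Fin.snoc (fun i : Fin (n + 1) => (A ^ (i : ℕ)) x₀)
          (((ContinuousLinearMap.adjoint A) ^ n) x₀) with hy
      have hdet' : (Matrix.of fun k l : Fin (n + 2) => (inner ℂ (y l) (y k) : ℂ)).det = 0 := hdet
      obtain ⟨c, hc0, hc⟩ := Matrix.exists_mulVec_eq_zero_iff.mpr hdet'
      have hwy : ∀ k, (inner ℂ (∑ l, (starRingEnd ℂ) (c l) • y l) (y k) : ℂ) = 0 := by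
        intro k
        have h1 := congrFun hc k
        simp only [Matrix.mulVec, dotProduct, Matrix.of_apply, Pi.zero_apply] at h1
        rw [sum_inner]
        simp only [inner_smul_left, RingHomCompTriple.comp_apply, Complex.conj_conj]
        rw [← h1]
        exact Finset.sum_congr rfl fun l _ => mul_comm _ _
      have hw0 : (∑ l, (starRingEnd ℂ) (c l) • y l) = 0 := by
        rw [← @inner_self_eq_zero ℂ, inner_sum]
        refine Finset.sum_eq_zero fun l _ => ?_
        rw [inner_smul_right, hwy, mul_zero]
      rw [Fin.sum_univ_castSucc] at hw0
      simp only [hy, Fin.snoc_castSucc, Fin.snoc_last] at hw0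
      by_cases hlast : c (Fin.last (n + 1)) = 0
      · exfalso
        rw [hlast] at hw0
        simp only [map_zero, zero_smul, add_zero] at hw0
        have hz := Fintype.linearIndependent_iff.mp (hindepF (n + 1))
          (fun i => (starRingEnd ℂ) (c i.castSucc)) hw0
        apply hc0
        funext i
        rcases Fin.eq_castSucc_or_eq_last i with ⟨j, rfl⟩ | rfl
        · have := hz j
          simpa [map_eq_zero] using this
        · exact hlast
      · have hlast' : (starRingEnd ℂ) (c (Fin.last (n + 1))) ≠ 0 := by
          simpa [map_eq_zero] using hlast
        have hrw : (starRingEnd ℂ) (c (Fin.last (n + 1))) • ((ContinuousLinearMap.adjoint A) ^ n) x₀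
            = - ∑ i : Fin (n + 1), (starRingEnd ℂ) (c i.castSucc) • v i := by
          linear_combination (norm := module) hw0
        have h2 : ((ContinuousLinearMap.adjoint A) ^ n) x₀
            = ((starRingEnd ℂ) (c (Fin.last (n + 1))))⁻¹ •
              ((starRingEnd ℂ) (c (Fin.last (n + 1))) • ((ContinuousLinearMap.adjoint A) ^ n) x₀) := by
          rw [smul_smul, inv_mul_cancel₀ hlast', one_smul]
        rw [h2, hrw]
        refine Submodule.smul_mem _ _ (neg_mem (Submodule.sum_mem _ fun i _ => ?_))
        exact Submodule.smul_mem _ _ (hvK i n i.is_le)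
  -- step 3 : J and A map the flag into itself
  have hJK : ∀ n, ∀ x ∈ K n, J x ∈ K n := by
    intro n x hx
    induction hx using Submodule.span_induction with
    | mem x hxmem =>
      obtain ⟨i, hi, rfl⟩ := hxmem
      rw [hJv i]
      exact hKmono hi (hgram i)
    | zero => rw [Jzero]; exact zero_mem _
    | add x y hx hy ihx ihy => rw [Jadd]; exact add_mem ihx ihy
    | smul a x hx ih => rw [Jsmul]; exact Submodule.smul_mem _ _ ih
  have hAK : ∀ n, ∀ x ∈ K n, A x ∈ K (n + 1) := by
    intro n x hx
    induction hx using Submodule.span_induction with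
    | mem x hxmem =>
      obtain ⟨i, hi, rfl⟩ := hxmem
      rw [hAv]
      exact hvK _ _ (Nat.succ_le_succ hi)
    | zero => simp
    | add x y hx hy ihx ihy => rw [map_add]; exact add_mem ihx ihy
    | smul a x hx ih => rw [map_smul]; exact Submodule.smul_mem _ _ ih
  have hAK' : ∀ n, ∀ x ∈ Submodule.span ℂ (v '' Set.Iio n), A x ∈ K n := by
    intro n x hx
    induction hx using Submodule.span_induction with
    | mem x hxmem =>
      obtain ⟨i, hi, rfl⟩ := hxmem
      rw [hAv]
      exact hvK _ _ hi
    | zero => simp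
    | add x y hx hy ihx ihy => rw [map_add]; exact add_mem ihx ihy
    | smul a x hx ih => rw [map_smul]; exact Submodule.smul_mem _ _ ih
  -- step 4 : Gram-Schmidt
  set f : ℕ → H := InnerProductSpace.gramSchmidtNormed ℂ v with hfdef
  have horthf : Orthonormal ℂ f := InnerProductSpace.gramSchmidtNormed_orthonormal hindep
  have hitef : ∀ i j, (inner ℂ (f i) (f j) : ℂ) = if i = j then 1 else 0 :=
    orthonormal_iff_ite.mp horthf
  have hspanf : ∀ n, Submodule.span ℂ (f '' Set.Iic n) = K n := by
    intro n
    rw [hfdef, InnerProductSpace.span_gramSchmidtNormed, InnerProductSpace.span_gramSchmidt_Iic]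
  have hfK : ∀ n, f n ∈ K n := by
    intro n
    have : f n ∈ Submodule.span ℂ (f '' Set.Iic n) :=
      Submodule.subset_span ⟨n, Set.self_mem_Iic, rfl⟩
    rwa [hspanf] at this
  have horthfK : ∀ n k : ℕ, n < k → ∀ x ∈ K n, (inner ℂ (f k) x : ℂ) = 0 := by
    intro n k hnk x hx
    rw [← hspanf] at hx
    induction hx using Submodule.span_induction with
    | mem x hxmem =>
      obtain ⟨i, hi, rfl⟩ := hxmem
      have hi' : i ≤ n := hi
      rw [hitef k i, if_neg (by omega)]
    | zero => exact inner_zero_right _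
    | add x y hx hy ihx ihy => rw [inner_add_right, ihx, ihy, add_zero]
    | smul a x hx ih => rw [inner_smul_right, ih, mul_zero]
  -- expansion lemma
  have hexpand : ∀ (n : ℕ) (x : H), x ∈ K n → (∀ i, i < n → (inner ℂ (f i) x : ℂ) = 0) →
      x = (inner ℂ (f n) x : ℂ) • f n := by
    intro n x hx hortho
    set u : H := x - (inner ℂ (f n) x : ℂ) • f n with hu
    have huK : u ∈ K n := by
      refine Submodule.sub_mem _ hx (Submodule.smul_mem _ _ (hfK n))
    have hju : ∀ j, j ≤ n → (inner ℂ (f j) u : ℂ) = 0 := by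
      intro j hj
      rw [hu, inner_sub_right, inner_smul_right, hitef j n]
      rcases lt_or_eq_of_le hj with h | rfl
      · rw [if_neg (by omega), mul_zero, hortho j h, sub_zero]
      · rw [if_pos rfl, mul_one, sub_self]
    have hzero : ∀ y ∈ K n, (inner ℂ y u : ℂ) = 0 := by
      intro y hy
      rw [← hspanf] at hy
      induction hy using Submodule.span_induction with
      | mem y hymem =>
        obtain ⟨i, hi, rfl⟩ := hymem
        exact hju i hi
      | zero => exact inner_zero_left _
      | add y z hy hz ihy ihz => rw [inner_add_left, ihy, ihz, add_zero]
      | smul a y hy ih => rw [inner_smul_left, ih, mul_zero]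
    have : u = 0 := inner_self_eq_zero.mp (hzero u huK)
    rw [hu] at this
    linear_combination (norm := module) this
  -- step 5 : J is diagonal on the Gram-Schmidt basis
  set c : ℕ → ℂ := fun n => (inner ℂ (f n) (J (f n)) : ℂ) with hcdef
  have hJf : ∀ n, J (f n) = c n • f n := by
    intro n
    refine hexpand n (J (f n)) (hJK n _ (hfK n)) fun i hi => ?_
    calc (inner ℂ (f i) (J (f n)) : ℂ) = inner ℂ (J (J (f i))) (J (f n)) := by rw [Jinv]
      _ = inner ℂ (f n) (J (f i)) := Jinner _ _
      _ = 0 := horthfK i n hi _ (hJK i _ (hfK i))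
  have hff1 : ∀ n, (inner ℂ (f n) (f n) : ℂ) = 1 := by
    intro n; rw [hitef n n, if_pos rfl]
  have hcunit : ∀ n, (starRingEnd ℂ) (c n) * c n = 1 := by
    intro n
    have h1 : (inner ℂ (J (f n)) (J (f n)) : ℂ) = inner ℂ (f n) (f n) := Jinner _ _
    rw [hJf n, inner_smul_left, inner_smul_right, hff1 n] at h1
    rw [← h1]; ring
  choose d hd using fun n => IsAlgClosed.exists_pow_nat_eq (k := ℂ) (c n) (n := 2) (by norm_num)
  have hdd : ∀ n, (starRingEnd ℂ) (d n) * d n = 1 := by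
    intro n
    have hsq : ((starRingEnd ℂ) (d n) * d n) ^ 2 = 1 := by
      have : (starRingEnd ℂ) (d n ^ 2) * d n ^ 2 = 1 := by rw [hd n]; exact hcunit n
      rw [map_pow] at this
      calc ((starRingEnd ℂ) (d n) * d n) ^ 2
          = (starRingEnd ℂ) (d n) ^ 2 * d n ^ 2 := by ring
        _ = 1 := this
    have hre : (starRingEnd ℂ) (d n) * d n = (Complex.normSq (d n) : ℂ) := by
      rw [Complex.normSq_eq_conj_mul_self]
    rw [hre] at hsq ⊢
    have hr2 : (Complex.normSq (d n)) ^ 2 = 1 := by exact_mod_cast hsq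
    have hrnn : 0 ≤ Complex.normSq (d n) := Complex.normSq_nonneg _
    have : Complex.normSq (d n) = 1 := by nlinarith
    rw [this]; norm_num
  have hd0 : ∀ n, d n ≠ 0 := by
    intro n h
    have := hdd n
    rw [h] at this
    simp at this
  have hnormd : ∀ n, ‖d n‖ = 1 := by
    intro n
    have h1 : (Complex.normSq (d n) : ℂ) = 1 := by
      rw [Complex.normSq_eq_conj_mul_self]; exact hdd n
    have h2 : Complex.normSq (d n) = 1 := by exact_mod_cast h1
    have := Complex.sq_norm (d n)
    rw [h2] at this
    have habs : ‖d n‖ = 1 := by nlinarith [norm_nonneg (d n)]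
    exact habs
  set e : ℕ → H := fun n => d n • f n with hedef
  have horthe : Orthonormal ℂ e := by
    constructor
    · intro n
      rw [hedef]
      simp only [norm_smul, hnormd n, one_mul]
      exact horthf.1 n
    · intro i j hij
      rw [hedef]
      simp only [inner_smul_left, inner_smul_right, hitef i j, if_neg hij, mul_zero]
  have hitee : ∀ i j, (inner ℂ (e i) (e j) : ℂ) = if i = j then 1 else 0 :=
    orthonormal_iff_ite.mp horthe
  have hJe : ∀ n, J (e n) = e n := by
    intro n
    rw [hedef]
    show J (d n • f n) = d n • f n
    rw [Jsmul, hJf n, smul_smul]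
    congr 1
    rw [← hd n, pow_two, ← mul_assoc, hdd n, one_mul]
  have hspan_ef : ∀ s : Set ℕ, Submodule.span ℂ (e '' s) = Submodule.span ℂ (f '' s) := by
    intro s
    apply Submodule.span_eq_span
    · rintro x ⟨i, hi, rfl⟩
      exact Submodule.smul_mem _ _ (Submodule.subset_span ⟨i, hi, rfl⟩)
    · rintro x ⟨i, hi, rfl⟩
      have hfi : f i = (d i)⁻¹ • e i := by
        rw [hedef]
        show f i = (d i)⁻¹ • (d i • f i)
        rw [smul_smul, inv_mul_cancel₀ (hd0 i), one_smul]
      rw [hfi]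
      exact Submodule.smul_mem _ _ (Submodule.subset_span ⟨i, hi, rfl⟩)
  have hspanKe : ∀ n, Submodule.span ℂ (e '' Set.Iic n) = K n := by
    intro n; rw [hspan_ef, hspanf]
  have heK : ∀ n, e n ∈ K n := by
    intro n
    have : e n ∈ Submodule.span ℂ (e '' Set.Iic n) :=
      Submodule.subset_span ⟨n, Set.self_mem_Iic, rfl⟩
    rwa [hspanKe] at this
  have horthKe : ∀ n k : ℕ, n < k → ∀ x ∈ K n, (inner ℂ (e k) x : ℂ) = 0 := by
    intro n k hnk x hx
    show (inner ℂ (d k • f k) x : ℂ) = 0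
    rw [inner_smul_left, horthfK n k hnk x hx, mul_zero]
  -- the Hilbert basis
  have hdenseE : Dense ((Submodule.span ℂ (Set.range e) : Submodule ℂ H) : Set H) := by
    have h1 : Submodule.span ℂ (Set.range e) = Submodule.span ℂ (Set.range v) := by
      have h2 : Submodule.span ℂ (Set.range e) = Submodule.span ℂ (Set.range f) := by
        rw [← Set.image_univ, ← Set.image_univ (f := f), hspan_ef]
      rw [h2, hfdef, InnerProductSpace.span_gramSchmidtNormed_range, InnerProductSpace.span_gramSchmidt]
    rw [h1]
    exact hcyc
  have hsp : ⊤ ≤ (Submodule.span ℂ (Set.range e)).topologicalClosure :=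
    (Submodule.dense_iff_topologicalClosure_eq_top.mp hdenseE).ge
  refine ⟨HilbertBasis.mk horthe hsp, ?_⟩
  have hEcoe : ⇑(HilbertBasis.mk horthe hsp) = e := HilbertBasis.coe_mk _ _
  -- symmetry of the matrix
  have hsymm : ∀ k l : ℕ, (inner ℂ (e k) (A (e l)) : ℂ) = inner ℂ (e l) (A (e k)) := by
    intro k l
    have h1 : (inner ℂ (J (A (e l))) (J (e k)) : ℂ) = inner ℂ (e k) (A (e l)) := Jinner _ _
    have h2 : J (A (e l)) = ContinuousLinearMap.adjoint A (e l) := by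
      conv_lhs => rw [← hJe l]
      exact hJAJ (e l)
    rw [h2, hJe k] at h1
    rw [← h1, ContinuousLinearMap.adjoint_inner_left]
  -- vanishing below the subdiagonal
  have hlow : ∀ k l : ℕ, l + 1 < k → (inner ℂ (e k) (A (e l)) : ℂ) = 0 := by
    intro k l h
    exact horthKe (l + 1) k h _ (hAK l _ (heK l))
  -- nonvanishing of the subdiagonal
  have hsub : ∀ l : ℕ, (inner ℂ (e (l + 1)) (A (e l)) : ℂ) ≠ 0 := by
    intro l
    -- decompose e l over the previous orbit vectors and v l
    have hel : e l ∈ K l := heK l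
    have hsplit : K l = Submodule.span ℂ (v '' Set.Iio l) ⊔ (ℂ ∙ v l) := by
      rw [hKdef]
      show Submodule.span ℂ (v '' Set.Iic l) = _
      rw [← Set.Iio_union_right, Set.image_union, Submodule.span_union, Set.image_singleton]
    rw [hsplit] at hel
    obtain ⟨s, hs, tv, htv, hsum⟩ := Submodule.mem_sup.mp hel
    obtain ⟨t, rfl⟩ := Submodule.mem_span_singleton.mp htv
    have horthprev : ∀ x ∈ Submodule.span ℂ (v '' Set.Iio l), (inner ℂ (e l) x : ℂ) = 0 := by
      intro x hx
      induction hx using Submodule.span_induction with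
      | mem x hxmem =>
        obtain ⟨i, hi, rfl⟩ := hxmem
        exact horthKe i l hi _ (hvK i i le_rfl)
      | zero => exact inner_zero_right _
      | add x y hx hy ihx ihy => rw [inner_add_right, ihx, ihy, add_zero]
      | smul a x hx ih => rw [inner_smul_right, ih, mul_zero]
    have ht : t ≠ 0 := by
      rintro rfl
      rw [zero_smul, add_zero] at hsum
      have h1 : (inner ℂ (e l) (e l) : ℂ) = 0 := by
        nth_rewrite 2 [← hsum]
        exact horthprev s hs
      rw [hitee l l, if_pos rfl] at h1
      exact one_ne_zero h1
    have hexp : (inner ℂ (e (l + 1)) (A (e l)) : ℂ) = t * inner ℂ (e (l + 1)) (v (l + 1)) := by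
      rw [← hsum, map_add, map_smul, hAv, inner_add_right, inner_smul_right,
        horthKe l (l + 1) (by omega) _ (hAK' l s hs), zero_add]
    rw [hexp]
    apply mul_ne_zero ht
    -- inner (e (l+1)) (v (l+1)) ≠ 0
    have hv1 : v (l + 1) ∈ K (l + 1) := hvK _ _ le_rfl
    have hsplit2 : K (l + 1) = K l ⊔ (ℂ ∙ e (l + 1)) := by
      rw [← hspanKe (l + 1), ← hspanKe l]
      rw [← Set.Iio_union_right, Set.image_union, Submodule.span_union, Set.image_singleton]
      congr 2
      ext x
      simp [Nat.lt_succ_iff]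
    rw [hsplit2] at hv1
    obtain ⟨s', hs', tv', htv', hsum'⟩ := Submodule.mem_sup.mp hv1
    obtain ⟨t', rfl⟩ := Submodule.mem_span_singleton.mp htv'
    have hval : (inner ℂ (e (l + 1)) (v (l + 1)) : ℂ) = t' := by
      rw [← hsum', inner_add_right, inner_smul_right,
        horthKe l (l + 1) (by omega) _ hs', hitee (l + 1) (l + 1), if_pos rfl, zero_add, mul_one]
    rw [hval]
    rintro rfl
    rw [zero_smul, add_zero] at hsum'
    have : v (l + 1) ∈ Submodule.span ℂ (v '' Set.Iic l) := by
      rw [hKdef] at hs'; rw [← hsum']; exact hs'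
    exact hindep.notMem_span_image (by simp) this
  -- assemble
  have hmx : ∀ k l, matrixIn A (HilbertBasis.mk horthe hsp) k l = (inner ℂ (e k) (A (e l)) : ℂ) := by
    intro k l
    show (inner ℂ ((HilbertBasis.mk horthe hsp) k) (A ((HilbertBasis.mk horthe hsp) l)) : ℂ) = _
    rw [hEcoe]
  refine ⟨?_, ?_, ?_⟩
  · intro k l habs
    rw [hmx]
    have : l + 1 < k ∨ k + 1 < l := by
      rcases lt_abs.mp habs with h | h
      · left; omega
      · right; omega
    rcases this with h | h
    · exact hlow k l h
    · rw [hsymm]; exact hlow l k h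
  · intro k l
    rw [hmx, hmx]
    exact hsymm k l
  · intro k
    rw [hmx, hsymm]
    exact hsub k
end
end

section
/- Let H be an infinite-dimensional separable complex Hilbert space and let A be a bounded linear operator on H belonging to the class C₋(H). Then: (i) A is a complex skew-symmetric operator with a simple spectrum; and (ii) there exist a conjugation J on H with JAJ = −A* and a cyclic vector x₀ of A with Jx₀ = x₀ such that Γ(x₀, Ax₀, …, Aⁿx₀, (A*)ⁿx₀) = 0 for every n ≥ 1. -/
open scoped ComplexConjugate

noncomputable section

variable {H : Type*} [NormedAddCommGroup H] [InnerProductSpace ℂ H]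

section Aux

set_option linter.unusedSectionVars false

variable [CompleteSpace H]

/-- The conjugation associated to a Hilbert basis. -/
def Jc (e : HilbertBasis ℕ ℂ H) : H → H := fun x => e.repr.symm (star (e.repr x))

lemma hb_ext (e : HilbertBasis ℕ ℂ H) {x y : H}
    (h : ∀ k, (inner ℂ (e k) x : ℂ) = inner ℂ (e k) y) : x = y := by
  have : e.repr x = e.repr y := by
    apply lp.ext
    funext k
    simpa [HilbertBasis.repr_apply_apply] using h k
  simpa using congrArg e.repr.symm this

lemma inner_Jc (e : HilbertBasis ℕ ℂ H) (k : ℕ) (x : H) :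
    (inner ℂ (e k) (Jc e x) : ℂ) = conj (inner ℂ (e k) x : ℂ) := by
  have h1 : (inner ℂ (e k) (Jc e x) : ℂ) = e.repr (Jc e x) k := by
    rw [HilbertBasis.repr_apply_apply]
  have h2 : e.repr (Jc e x) = star (e.repr x) := e.repr.apply_symm_apply _
  rw [h1, h2, lp.star_apply, HilbertBasis.repr_apply_apply]
  rfl

lemma Jc_inner (e : HilbertBasis ℕ ℂ H) (x y : H) :
    (inner ℂ (Jc e x) (Jc e y) : ℂ) = inner ℂ y x := by
  unfold Jc
  rw [e.repr.symm.inner_map_map]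
  rw [lp.inner_eq_tsum, ← e.repr.inner_map_map y x, lp.inner_eq_tsum]
  congr 1
  funext i
  simp [RCLike.inner_apply, lp.star_apply]
  ring

lemma Jc_conjugation (e : HilbertBasis ℕ ℂ H) : IsConjugation (Jc e) := by
  refine ⟨?_, ?_, ?_, Jc_inner e⟩
  · intro x y; unfold Jc; rw [map_add, star_add, map_add]
  · intro c x; unfold Jc
    rw [map_smul, star_smul, map_smul]
    rfl
  · intro x; unfold Jc
    rw [e.repr.apply_symm_apply, star_star, e.repr.symm_apply_apply]

lemma Jc_e (e : HilbertBasis ℕ ℂ H) (k : ℕ) : Jc e (e k) = e k := by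
  apply hb_ext e
  intro j
  rw [inner_Jc, orthonormal_iff_ite.mp e.orthonormal j k]
  split <;> simp

lemma inner_e_e (e : HilbertBasis ℕ ℂ H) (j k : ℕ) :
    (inner ℂ (e j) (e k) : ℂ) = if j = k then 1 else 0 :=
  orthonormal_iff_ite.mp e.orthonormal j k

lemma diag_zero {m : ℕ → ℕ → ℂ} (hm : MemM3minus m) (k : ℕ) : m k k = 0 := by
  have := hm.2.1 k k; linear_combination this / 2

lemma A_apply_e (A : H →L[ℂ] H) (e : HilbertBasis ℕ ℂ H)
    (hm : MemM3minus (matrixIn A e)) (l : ℕ) :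
    A (e l) = matrixIn A e (l-1) l • e (l-1) + matrixIn A e (l+1) l • e (l+1) := by
  set m := matrixIn A e with hmdef
  apply hb_ext e
  intro k
  have hk : (inner ℂ (e k) (A (e l)) : ℂ) = m k l := rfl
  rw [hk, inner_add_right, inner_smul_right, inner_smul_right, inner_e_e, inner_e_e]
  rcases Nat.eq_zero_or_pos l with rfl | hl
  · rcases eq_or_ne k 0 with rfl | hk0
    · simp [diag_zero hm]
    · rcases eq_or_ne k 1 with rfl | hk1
      · simp
      · have : m k 0 = 0 := hm.1 k 0 (by rw [lt_abs]; omega)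
        simp [hk0, hk1, this]
  · rcases eq_or_ne k (l-1) with rfl | h1
    · have : l - 1 ≠ l + 1 := by omega
      simp [this]
    · rcases eq_or_ne k (l+1) with rfl | h2
      · simp [h1]
      · rcases eq_or_ne k l with rfl | h3
        · simp [h1, h2, diag_zero hm]
        · have : m k l = 0 := hm.1 k l (by rw [lt_abs]; omega)
          simp [h1, h2, this]

lemma Aadj_apply_e (A : H →L[ℂ] H) (e : HilbertBasis ℕ ℂ H)
    (hm : MemM3minus (matrixIn A e)) (l : ℕ) :
    ContinuousLinearMap.adjoint A (e l) =
      conj (matrixIn A e l (l-1)) • e (l-1) + conj (matrixIn A e l (l+1)) • e (l+1) := by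
  set m := matrixIn A e with hmdef
  apply hb_ext e
  intro k
  have hk : (inner ℂ (e k) (ContinuousLinearMap.adjoint A (e l)) : ℂ) = conj (m l k) := by
    rw [ContinuousLinearMap.adjoint_inner_right]
    rw [← inner_conj_symm]
    rfl
  rw [hk, inner_add_right, inner_smul_right, inner_smul_right, inner_e_e, inner_e_e]
  rcases Nat.eq_zero_or_pos l with rfl | hl
  · rcases eq_or_ne k 0 with rfl | hk0
    · simp [diag_zero hm]
    · rcases eq_or_ne k 1 with rfl | hk1
      · simp
      · have : m 0 k = 0 := hm.1 0 k (by rw [lt_abs]; omega)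
        simp [hk0, hk1, this]
  · rcases eq_or_ne k (l-1) with rfl | h1
    · have : l - 1 ≠ l + 1 := by omega
      simp [this]
    · rcases eq_or_ne k (l+1) with rfl | h2
      · simp [h1]
      · rcases eq_or_ne k l with rfl | h3
        · simp [h1, h2, diag_zero hm]
        · have : m l k = 0 := hm.1 l k (by rw [lt_abs]; omega)
          simp [h1, h2, this]

lemma Jc_Aadj_e (A : H →L[ℂ] H) (e : HilbertBasis ℕ ℂ H)
    (hm : MemM3minus (matrixIn A e)) (l : ℕ) :
    Jc e (ContinuousLinearMap.adjoint A (e l)) = - A (e l) := by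
  obtain ⟨hadd, hsmul, hinv, hJi⟩ := Jc_conjugation e
  rw [Aadj_apply_e A e hm l, hadd, hsmul, hsmul, Jc_e, Jc_e, A_apply_e A e hm l]
  simp only [Complex.conj_conj]
  rw [hm.2.1 l (l-1), hm.2.1 l (l+1)]
  module

lemma JAJ_eq (A : H →L[ℂ] H) (e : HilbertBasis ℕ ℂ H)
    (hm : MemM3minus (matrixIn A e)) (x : H) :
    Jc e (A (Jc e x)) = - ContinuousLinearMap.adjoint A x := by
  obtain ⟨hadd, hsmul, hinv, hJi⟩ := Jc_conjugation e
  have key : ∀ (u : H) (v : H), (inner ℂ u (Jc e v) : ℂ) = conj (inner ℂ (Jc e u) v : ℂ) := by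
    intro u v
    calc (inner ℂ u (Jc e v) : ℂ) = inner ℂ (Jc e (Jc e u)) (Jc e v) := by rw [hinv]
    _ = inner ℂ v (Jc e u) := hJi _ _
    _ = conj (inner ℂ (Jc e u) v : ℂ) := by rw [inner_conj_symm]
  apply hb_ext e
  intro k
  calc (inner ℂ (e k) (Jc e (A (Jc e x))) : ℂ)
      = conj (inner ℂ (e k) (A (Jc e x)) : ℂ) := inner_Jc e k _
    _ = conj (inner ℂ (ContinuousLinearMap.adjoint A (e k)) (Jc e x) : ℂ) := by
        rw [ContinuousLinearMap.adjoint_inner_left]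
    _ = conj (conj (inner ℂ (Jc e (ContinuousLinearMap.adjoint A (e k))) x : ℂ)) := by
        rw [key]
    _ = inner ℂ (Jc e (ContinuousLinearMap.adjoint A (e k))) x := Complex.conj_conj _
    _ = inner ℂ (- A (e k) : H) x := by rw [Jc_Aadj_e A e hm]
    _ = - inner ℂ (A (e k)) x := by rw [inner_neg_left]
    _ = - inner ℂ (e k) (ContinuousLinearMap.adjoint A x) := by
        rw [ContinuousLinearMap.adjoint_inner_right]
    _ = inner ℂ (e k) (- ContinuousLinearMap.adjoint A x : H) := by rw [inner_neg_right]

lemma e_mem_orbit_span (A : H →L[ℂ] H) (e : HilbertBasis ℕ ℂ H)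
    (hm : MemM3minus (matrixIn A e)) (n : ℕ) :
    e n ∈ Submodule.span ℂ (Set.range fun k : ℕ => (A ^ k) (e 0)) := by
  set S := Submodule.span ℂ (Set.range fun k : ℕ => (A ^ k) (e 0)) with hS
  have hAS : ∀ v ∈ S, A v ∈ S := by
    intro v hv
    induction hv using Submodule.span_induction with
    | mem x hx =>
      obtain ⟨k, rfl⟩ := hx
      apply Submodule.subset_span
      exact ⟨k + 1, by show (A ^ (k+1)) (e 0) = A ((A ^ k) (e 0)); rw [pow_succ']; rfl⟩
    | zero => simpa using S.zero_mem
    | add x y _ _ hx hy => rw [map_add]; exact S.add_mem hx hy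
    | smul c x _ hx => rw [map_smul]; exact S.smul_mem c hx
  have h0 : e 0 ∈ S := Submodule.subset_span ⟨0, by simp⟩
  have step : ∀ l : ℕ, e (l - 1) ∈ S → e l ∈ S → e (l + 1) ∈ S := by
    intro l h1 h2
    have hA := A_apply_e A e hm l
    have hne : matrixIn A e (l + 1) l ≠ 0 := by
      rw [hm.2.1]; simpa using hm.2.2 l
    have : e (l + 1) = (matrixIn A e (l+1) l)⁻¹ •
        (A (e l) - matrixIn A e (l-1) l • e (l-1)) := by
      rw [hA]
      rw [add_sub_cancel_left, smul_smul, inv_mul_cancel₀ hne, one_smul]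
    rw [this]
    exact S.smul_mem _ (S.sub_mem (hAS _ h2) (S.smul_mem _ h1))
  have main : ∀ n : ℕ, e n ∈ S ∧ e (n + 1) ∈ S := by
    intro n
    induction n with
    | zero => exact ⟨h0, by simpa using step 0 h0 h0⟩
    | succ k ih => exact ⟨ih.2, step (k + 1) (by simpa using ih.1) ih.2⟩
  exact (main n).1

lemma cyclic_e0 (A : H →L[ℂ] H) (e : HilbertBasis ℕ ℂ H)
    (hm : MemM3minus (matrixIn A e)) : IsCyclicVector A (e 0) := by
  have h1 : Dense ((Submodule.span ℂ (Set.range e) : Submodule ℂ H) : Set H) :=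
    Submodule.dense_iff_topologicalClosure_eq_top.mpr e.dense_span
  apply h1.mono
  apply Submodule.span_le.mpr
  rintro x ⟨k, rfl⟩
  exact e_mem_orbit_span A e hm k

lemma gramDet_eq_zero_of_dep {n : ℕ} (y : Fin n → H) (g : Fin n → ℂ)
    (hg : ∑ i, g i • y i = 0) (j : Fin n) (hj : g j ≠ 0) : gramDet y = 0 := by
  rw [gramDet, ← Matrix.exists_mulVec_eq_zero_iff]
  refine ⟨fun i => conj (g i), ?_, ?_⟩
  · intro h
    apply hj
    have := congrFun h j
    simpa using this
  · funext k
    show ∑ l, (inner ℂ (y l) (y k) : ℂ) * conj (g l) = 0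
    calc ∑ l, (inner ℂ (y l) (y k) : ℂ) * conj (g l)
        = ∑ l, (inner ℂ (g l • y l) (y k) : ℂ) := by
          refine Finset.sum_congr rfl fun l _ => ?_
          rw [inner_smul_left]; ring
      _ = inner ℂ (∑ l, g l • y l) (y k) := by rw [← sum_inner]
      _ = 0 := by rw [hg, inner_zero_left]

lemma pow_mem_span (B : H →L[ℂ] H) (e : HilbertBasis ℕ ℂ H)
    (hB : ∀ l : ℕ, B (e l) ∈ Submodule.span ℂ {x : H | ∃ j ≤ l + 1, x = e j})
    (i : ℕ) : (B ^ i) (e 0) ∈ Submodule.span ℂ {x : H | ∃ j ≤ i, x = e j} := by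
  induction i with
  | zero => exact Submodule.subset_span ⟨0, le_refl 0, by simp⟩
  | succ i ih =>
    have h2 : (B ^ (i+1)) (e 0) = B ((B ^ i) (e 0)) := by rw [pow_succ']; rfl
    rw [h2]
    have key : ∀ v ∈ Submodule.span ℂ {x : H | ∃ j ≤ i, x = e j},
        B v ∈ Submodule.span ℂ {x : H | ∃ j ≤ i + 1, x = e j} := by
      intro v hv
      induction hv using Submodule.span_induction with
      | mem x hx =>
        obtain ⟨j, hj, rfl⟩ := hx
        refine Submodule.span_mono ?_ (hB j)
        rintro x ⟨j', hj', rfl⟩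
        exact ⟨j', by omega, rfl⟩
      | zero => simp
      | add x y _ _ hx hy => rw [map_add]; exact Submodule.add_mem _ hx hy
      | smul c x _ hx => rw [map_smul]; exact Submodule.smul_mem _ c hx
    exact key _ ih

lemma gamma_aux (A : H →L[ℂ] H) (e : HilbertBasis ℕ ℂ H)
    (hm : MemM3minus (matrixIn A e)) (n : ℕ) (hn : 1 ≤ n) :
    gramDet (Fin.snoc (fun i : Fin (n + 1) => (A ^ (i : ℕ)) (e 0))
      ((ContinuousLinearMap.adjoint A ^ n) (e 0))) = 0 := by
  set W : Submodule ℂ H := Submodule.span ℂ {x : H | ∃ j ≤ n, x = e j} with hW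
  set y : Fin (n + 2) → H := Fin.snoc (fun i : Fin (n + 1) => (A ^ (i : ℕ)) (e 0))
      ((ContinuousLinearMap.adjoint A ^ n) (e 0)) with hy
  have hWmem : ∀ i, y i ∈ W := by
    intro i
    induction i using Fin.lastCases with
    | last =>
      rw [hy]
      rw [Fin.snoc_last]
      refine pow_mem_span _ e (fun l => ?_) n
      rw [Aadj_apply_e A e hm l]
      exact Submodule.add_mem _
        (Submodule.smul_mem _ _ (Submodule.subset_span ⟨l - 1, by omega, rfl⟩))
        (Submodule.smul_mem _ _ (Submodule.subset_span ⟨l + 1, le_refl _, rfl⟩))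
    | cast i =>
      rw [hy, Fin.snoc_castSucc]
      have h1 : (A ^ (i : ℕ)) (e 0) ∈ Submodule.span ℂ {x : H | ∃ j ≤ (i : ℕ), x = e j} := by
        refine pow_mem_span _ e (fun l => ?_) (i : ℕ)
        rw [A_apply_e A e hm l]
        exact Submodule.add_mem _
          (Submodule.smul_mem _ _ (Submodule.subset_span ⟨l - 1, by omega, rfl⟩))
          (Submodule.smul_mem _ _ (Submodule.subset_span ⟨l + 1, le_refl _, rfl⟩))
      refine Submodule.span_mono ?_ h1
      rintro x ⟨j, hj, rfl⟩
      exact ⟨j, by omega, rfl⟩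
  have hset : {x : H | ∃ j ≤ n, x = e j} = Set.range (fun i : Fin (n+1) => e i) := by
    ext x
    constructor
    · rintro ⟨j, hj, rfl⟩; exact ⟨⟨j, by omega⟩, rfl⟩
    · rintro ⟨i, rfl⟩; exact ⟨(i : ℕ), by omega, rfl⟩
  have hfd : FiniteDimensional ℂ W := by
    rw [hW, hset]
    exact FiniteDimensional.span_of_finite ℂ (Set.finite_range _)
  have hrank : Module.finrank ℂ W ≤ n + 1 := by
    rw [hW, hset]
    simpa [Set.finrank] using finrank_range_le_card (fun i : Fin (n+1) => e i)
  set y' : Fin (n + 2) → W := fun i => ⟨y i, hWmem i⟩ with hy'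
  have hnotli : ¬ LinearIndependent ℂ y' := by
    intro hli
    have := hli.fintype_card_le_finrank
    simp only [Fintype.card_fin] at this
    omega
  obtain ⟨g, hsum, j, hj⟩ := Fintype.not_linearIndependent_iff.mp hnotli
  refine gramDet_eq_zero_of_dep y g ?_ j hj
  have := congrArg (W.subtype) hsum
  simpa using this

end Aux

/-- If `A ∈ C₋(H)` then `A` is complex skew-symmetric with a simple spectrum,
and there are a conjugation `J` with `JAJ = −A*` and a cyclic vector `x₀` with `Jx₀ = x₀`
such that `Γ(x₀, Ax₀, …, Aⁿx₀, (A*)ⁿx₀) = 0` for all `n ≥ 1`. -/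
theorem statement2 {H : Type*} [NormedAddCommGroup H] [InnerProductSpace ℂ H]
    [CompleteSpace H] [TopologicalSpace.SeparableSpace H]
    (hinf : ¬ FiniteDimensional ℂ H)
    (A : H →L[ℂ] H) (hA : MemCminus A) :
    ((∃ J : H → H, IsConjugation J ∧
        ∀ x : H, J (A (J x)) = - ContinuousLinearMap.adjoint A x) ∧
      (∃ x₀ : H, IsCyclicVector A x₀)) ∧
    (∃ (J : H → H) (x₀ : H), IsConjugation J ∧
      (∀ x : H, J (A (J x)) = - ContinuousLinearMap.adjoint A x) ∧
      IsCyclicVector A x₀ ∧ J x₀ = x₀ ∧ GammaVanish A x₀) := by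
  obtain ⟨e, hm⟩ := hA
  have hconj := Jc_conjugation e
  have hJAJ := JAJ_eq A e hm
  have hcyc := cyclic_e0 A e hm
  refine ⟨⟨⟨Jc e, hconj, hJAJ⟩, ⟨e 0, hcyc⟩⟩,
    ⟨Jc e, e 0, hconj, hJAJ, hcyc, Jc_e e 0, fun n hn => gamma_aux A e hm n hn⟩⟩
end
end

section
/- Let H be an infinite-dimensional separable complex Hilbert space and let A be a bounded linear operator on H. Suppose there exist a conjugation J on H with JAJ = −A* and a cyclic vector x₀ of A with Jx₀ = x₀ such that Γ(x₀, Ax₀, …, Aⁿx₀, (A*)ⁿx₀) = 0 for every n ≥ 1. Then A belongs to the class C₋(H). -/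
open scoped ComplexConjugate

noncomputable section

variable {H : Type*} [NormedAddCommGroup H] [InnerProductSpace ℂ H]

section Aux

variable [CompleteSpace H]

lemma gramDet_ne_zero_of_linearIndependent {n : ℕ} {y : Fin n → H}
    (h : LinearIndependent ℂ y) : gramDet y ≠ 0 := by
  intro hdet
  classical
  obtain ⟨c, hc0, hmv⟩ := (Matrix.exists_mulVec_eq_zero_iff).2 hdet
  set u : H := ∑ l, (starRingEnd ℂ) (c l) • y l with hu
  have hinner : ∀ k, (inner ℂ u (y k) : ℂ) = 0 := by
    intro k
    have := congrFun hmv k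
    simp only [Matrix.mulVec, dotProduct, Matrix.of_apply, Pi.zero_apply] at this
    rw [hu, sum_inner]
    rw [← this]
    refine Finset.sum_congr rfl fun l _ => ?_
    rw [inner_smul_left]
    simp [mul_comm]
  have hu0 : u = 0 := by
    have : (inner ℂ u u : ℂ) = 0 := by
      rw [hu, inner_sum]
      refine Finset.sum_eq_zero fun l _ => ?_
      rw [inner_smul_right, hinner l, mul_zero]
    exact inner_self_eq_zero.mp this
  have hz : ∀ l, (starRingEnd ℂ) (c l) = 0 :=
    Fintype.linearIndependent_iff.mp h _ (hu ▸ hu0)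
  apply hc0
  funext l
  have := hz l
  simpa using congrArg (starRingEnd ℂ) this

lemma mem_span_of_gramDet_snoc {n : ℕ} {v : Fin n → H} {w : H}
    (hv : LinearIndependent ℂ v) (h : gramDet (Fin.snoc v w) = 0) :
    w ∈ Submodule.span ℂ (Set.range v) := by
  by_contra hw
  exact gramDet_ne_zero_of_linearIndependent
    (linearIndependent_fin_snoc.mpr ⟨hv, hw⟩) h

end Aux

/-- If there are a conjugation `J` with `JAJ = −A*` and a cyclic vector `x₀`
with `Jx₀ = x₀` such that `Γ(x₀, Ax₀, …, Aⁿx₀, (A*)ⁿx₀) = 0` for all `n ≥ 1`,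
then `A ∈ C₋(H)`. -/
theorem statement3 {H : Type*} [NormedAddCommGroup H] [InnerProductSpace ℂ H]
    [CompleteSpace H] [TopologicalSpace.SeparableSpace H]
    (hinf : ¬ FiniteDimensional ℂ H)
    (A : H →L[ℂ] H) (J : H → H) (x₀ : H)
    (hJ : IsConjugation J)
    (hJAJ : ∀ x : H, J (A (J x)) = - ContinuousLinearMap.adjoint A x)
    (hcyc : IsCyclicVector A x₀) (hJx₀ : J x₀ = x₀)
    (hΓ : GammaVanish A x₀) :
    MemCminus A := by
  classical
  obtain ⟨hadd, hsmul, hJJ, hip⟩ := hJ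
  set A' : H →L[ℂ] H := ContinuousLinearMap.adjoint A with hA'def
  set v : ℕ → H := fun k => (A ^ k) x₀ with hvdef
  have hv0 : v 0 = x₀ := by simp [hvdef]
  have hvs : ∀ k, v (k + 1) = A (v k) := by
    intro k
    simp only [hvdef, pow_succ', ContinuousLinearMap.mul_apply]
  set K : ℕ → Submodule ℂ H := fun n => Submodule.span ℂ (v '' Set.Iic n) with hKdef
  have hKmono : ∀ {m n : ℕ}, m ≤ n → K m ≤ K n := by
    intro m n hmn
    exact Submodule.span_mono (Set.image_mono (f := v) (Set.Iic_subset_Iic.mpr hmn))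
  have hvK : ∀ {i n : ℕ}, i ≤ n → v i ∈ K n := by
    intro i n hin
    exact Submodule.subset_span ⟨i, hin, rfl⟩
  have hAK : ∀ {n : ℕ} (x : H), x ∈ K n → A x ∈ K (n + 1) := by
    intro n x hx
    induction hx using Submodule.span_induction with
    | mem y hy =>
      obtain ⟨i, hi, rfl⟩ := hy
      rw [← hvs i]
      have hi' : i ≤ n := hi
      exact hvK (by omega)
    | zero => simp only [map_zero]; exact Submodule.zero_mem _
    | add y z _ _ hy hz => rw [map_add]; exact Submodule.add_mem _ hy hz
    | smul c y _ hy => rw [map_smul]; exact Submodule.smul_mem _ _ hy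
  have hnotall : ∀ n : ℕ, ¬ (∀ m, v m ∈ K n) := by
    intro n hall
    have hfd : FiniteDimensional ℂ (K n) :=
      FiniteDimensional.span_of_finite ℂ ((Set.finite_Iic n).image v)
    have hclosed : IsClosed ((K n : Set H)) := Submodule.closed_of_finiteDimensional _
    have hle : (Submodule.span ℂ (Set.range fun k : ℕ => (A ^ k) x₀) : Set H) ⊆ K n := by
      have : Submodule.span ℂ (Set.range fun k : ℕ => (A ^ k) x₀) ≤ K n := by
        rw [Submodule.span_le]
        rintro _ ⟨m, rfl⟩
        exact hall m
      exact this
    have hdense : Dense ((K n : Set H)) := hcyc.mono hle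
    have htop : ∀ x : H, x ∈ K n := by
      intro x
      have hx := hdense x
      rwa [hclosed.closure_eq] at hx
    have hKtop : K n = ⊤ := Submodule.eq_top_iff'.mpr htop
    rw [hKtop] at hfd
    exact hinf (Submodule.topEquiv.finiteDimensional)
  have hstep : ∀ n : ℕ, v (n + 1) ∉ K n := by
    intro n hmem
    apply hnotall n
    have hAn : ∀ x ∈ K n, A x ∈ K n := by
      intro x hx
      induction hx using Submodule.span_induction with
      | mem y hy =>
        obtain ⟨i, hi, rfl⟩ := hy
        rw [← hvs i]
        have hi' : i ≤ n := hi
        rcases Nat.lt_or_ge i n with h | h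
        · exact hvK (by omega)
        · have : i = n := le_antisymm hi' h
          rw [this]
          exact hmem
      | zero => simp only [map_zero]; exact Submodule.zero_mem _
      | add y z _ _ hy hz => rw [map_add]; exact Submodule.add_mem _ hy hz
      | smul c y _ hy => rw [map_smul]; exact Submodule.smul_mem _ _ hy
    intro m
    induction m with
    | zero => exact hvK (Nat.zero_le n)
    | succ m ih =>
      rw [hvs m]
      exact hAn _ ih
  have hx0 : x₀ ≠ 0 := by
    intro h0
    apply hnotall 0
    intro m
    have : v m = 0 := by
      induction m with
      | zero => rw [hv0, h0]
      | succ m ih => rw [hvs m, ih, map_zero]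
    rw [this]
    exact Submodule.zero_mem _
  have hrange : ∀ n : ℕ, Submodule.span ℂ (Set.range fun i : Fin (n + 1) => v (i : ℕ)) = K n := by
    intro n
    apply le_antisymm
    · rw [Submodule.span_le]
      rintro _ ⟨i, rfl⟩
      exact hvK (Nat.lt_succ_iff.mp i.isLt)
    · show Submodule.span ℂ (v '' Set.Iic n) ≤ _
      rw [Submodule.span_le]
      rintro _ ⟨m, hm, rfl⟩
      exact Submodule.subset_span ⟨⟨m, Nat.lt_succ_of_le hm⟩, rfl⟩
  have hLIfin : ∀ n : ℕ, LinearIndependent ℂ (fun i : Fin (n + 1) => v (i : ℕ)) := by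
    intro n
    induction n with
    | zero =>
      show LinearIndependent ℂ (fun i : Fin 1 => v (i : ℕ))
      refine linearIndependent_unique_iff.mpr ?_
      show v 0 ≠ 0
      rw [hv0]; exact hx0
    | succ n ih =>
      have hsnoc : (fun i : Fin (n + 2) => v (i : ℕ)) =
          Fin.snoc (fun i : Fin (n + 1) => v (i : ℕ)) (v (n + 1)) := by
        funext i
        refine Fin.lastCases ?_ (fun j => ?_) i
        · simp [Fin.snoc_last]
        · simp [Fin.snoc_castSucc]
      rw [hsnoc]
      refine linearIndependent_fin_snoc.mpr ⟨ih, ?_⟩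
      intro hmem
      apply hstep n
      rw [← hrange n]
      exact hmem
  have hLI : LinearIndependent ℂ v := by
    rw [linearIndependent_iff']
    intro s gc hsum i hi
    set N := s.sup id with hN
    have hsub : s ⊆ Finset.range (N + 1) := by
      intro j hj
      exact Finset.mem_range.mpr (Nat.lt_succ_of_le (Finset.le_sup (f := id) hj))
    have h0 : ∑ j : Fin (N + 1), (if (j : ℕ) ∈ s then gc (j : ℕ) else 0) • v (j : ℕ) = 0 := by
      rw [Fin.sum_univ_eq_sum_range (fun m => (if m ∈ s then gc m else 0) • v m) (N + 1)]
      rw [← Finset.sum_subset hsub (fun x _ hxs => by simp [hxs])]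
      rw [← hsum]
      exact Finset.sum_congr rfl fun x hx => by simp [hx]
    have hz := Fintype.linearIndependent_iff.mp (hLIfin N) _ h0
      ⟨i, Finset.mem_range.mp (hsub hi)⟩
    simpa [hi] using hz
  have hadj : ∀ n : ℕ, (A' ^ n) x₀ ∈ K n := by
    intro n
    match n with
    | 0 => simp only [pow_zero, ContinuousLinearMap.one_apply]; rw [← hv0]; exact hvK le_rfl
    | Nat.succ m =>
      have h := hΓ (m + 1) (Nat.succ_le_succ (Nat.zero_le m))
      have hmem := mem_span_of_gramDet_snoc (hLIfin (m + 1)) h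
      rw [hrange (m + 1)] at hmem
      exact hmem
  have hJA : ∀ y : H, J (A y) = - A' (J y) := by
    intro y
    have := hJAJ (J y)
    rwa [hJJ y] at this
  have hJ0 : J 0 = 0 := by
    have := hadd 0 0
    rw [add_zero] at this
    exact (by simpa using this)
  have hJv : ∀ i : ℕ, J (v i) ∈ K i := by
    intro i
    have hJvi : ∀ i : ℕ, J (v i) = ((-1 : ℂ)) ^ i • (A' ^ i) x₀ := by
      intro i
      induction i with
      | zero => rw [hv0, hJx₀]; simp
      | succ i ih =>
        rw [hvs i, hJA (v i), ih, map_smul]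
        rw [pow_succ' A' i, ContinuousLinearMap.mul_apply, ← neg_smul]
        congr 1
        ring
    rw [hJvi i]
    exact Submodule.smul_mem _ _ (hadj i)
  have hJK : ∀ (n : ℕ) (x : H), x ∈ K n → J x ∈ K n := by
    intro n x hx
    induction hx using Submodule.span_induction with
    | mem y hy =>
      obtain ⟨i, hi, rfl⟩ := hy
      exact hKmono hi (hJv i)
    | zero => rw [hJ0]; exact Submodule.zero_mem _
    | add y z _ _ hy hz => rw [hadd]; exact Submodule.add_mem _ hy hz
    | smul c y _ hy => rw [hsmul]; exact Submodule.smul_mem _ _ hy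
  -- Gram--Schmidt
  open InnerProductSpace in
  set g : ℕ → H := gramSchmidt ℂ v with hgdef
  set f : ℕ → H := gramSchmidtNormed ℂ v with hfdef
  have honf : Orthonormal ℂ f := gramSchmidtNormed_orthonormal hLI
  have hg0 : ∀ k, g k ≠ 0 := fun k => gramSchmidt_ne_zero k hLI
  have hfg : ∀ k, f k = ((‖g k‖ : ℂ))⁻¹ • g k := fun k => rfl
  have hspanf : ∀ n, Submodule.span ℂ (f '' Set.Iic n) = K n := by
    intro n
    rw [hfdef, span_gramSchmidtNormed, span_gramSchmidt_Iic]
  have hfK : ∀ n, f n ∈ K n := by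
    intro n
    rw [← hspanf n]
    exact Submodule.subset_span ⟨n, Set.self_mem_Iic, rfl⟩
  have hfite : ∀ i j, (inner ℂ (f i) (f j) : ℂ) = if i = j then 1 else 0 :=
    orthonormal_iff_ite.mp honf
  have hforth : ∀ {m n : ℕ}, m < n → ∀ x ∈ K m, (inner ℂ (f n) x : ℂ) = 0 := by
    intro m n hmn x hx
    rw [← hspanf m] at hx
    induction hx using Submodule.span_induction with
    | mem y hy =>
      obtain ⟨j, hj, rfl⟩ := hy
      rw [hfite]
      have hj' : j ≤ m := hj
      have : n ≠ j := by omega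
      simp [this]
    | zero => exact inner_zero_right _
    | add y z _ _ hy hz => rw [inner_add_right, hy, hz, add_zero]
    | smul c y _ hy => rw [inner_smul_right, hy, mul_zero]
  set c : ℕ → ℂ := fun n => inner ℂ (f n) (J (f n)) with hcdef
  have hJf : ∀ n, J (f n) = c n • f n := by
    intro n
    have huK : J (f n) - c n • f n ∈ K n :=
      Submodule.sub_mem _ (hJK n _ (hfK n)) (Submodule.smul_mem _ _ (hfK n))
    have horth : ∀ j ≤ n, (inner ℂ (f j) (J (f n) - c n • f n) : ℂ) = 0 := by
      intro j hj
      rw [inner_sub_right, inner_smul_right]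
      rcases eq_or_lt_of_le hj with h | h
      · subst h
        rw [hfite]
        simp [hcdef]
      · have h1 : (inner ℂ (f j) (J (f n)) : ℂ) = inner ℂ (f n) (J (f j)) := by
          have := hip (J (f j)) (f n)
          rwa [hJJ (f j)] at this
        rw [h1, hforth h _ (hJK j _ (hfK j)), hfite]
        have : j ≠ n := by omega
        simp [this]
    have hzero : ∀ x ∈ K n, (inner ℂ x (J (f n) - c n • f n) : ℂ) = 0 := by
      intro x hx
      rw [← hspanf n] at hx
      induction hx using Submodule.span_induction with
      | mem y hy =>
        obtain ⟨j, hj, rfl⟩ := hy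
        exact horth j hj
      | zero => exact inner_zero_left _
      | add y z _ _ hy hz => rw [inner_add_left, hy, hz, add_zero]
      | smul a y _ hy => rw [inner_smul_left, hy, mul_zero]
    have : J (f n) - c n • f n = 0 :=
      inner_self_eq_zero.mp (hzero _ huK)
    rw [sub_eq_zero] at this
    exact this
  have hnormJf : ∀ n, (inner ℂ (J (f n)) (J (f n)) : ℂ) = 1 := by
    intro n
    rw [hip (f n) (f n), hfite]
    simp
  have hcabs : ∀ n, ‖c n‖ = 1 := by
    intro n
    have h1 := hnormJf n
    rw [hJf n, inner_smul_left, inner_smul_right, hfite] at h1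
    simp only [if_true, eq_self_iff_true, mul_one] at h1
    have h2 : (Complex.normSq (c n) : ℂ) = 1 := by
      rw [Complex.normSq_eq_conj_mul_self]
      exact h1
    have h3 : Complex.normSq (c n) = 1 := by exact_mod_cast h2
    rw [Complex.norm_def, h3, Real.sqrt_one]
  set μ : ℕ → ℂ := fun n => Complex.exp (((c n).arg / 2 : ℝ) * Complex.I) with hμdef
  have hμ0 : ∀ n, μ n ≠ 0 := fun n => Complex.exp_ne_zero _
  have hμsq : ∀ n, μ n * μ n = c n := by
    intro n
    rw [hμdef]
    rw [← Complex.exp_add]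
    have harg : ((((c n).arg / 2 : ℝ)) * Complex.I) + ((((c n).arg / 2 : ℝ)) * Complex.I)
        = ((c n).arg : ℝ) * Complex.I := by
      push_cast
      ring
    rw [harg]
    have := Complex.norm_mul_exp_arg_mul_I (c n)
    rw [hcabs n] at this
    simpa using this
  have hμconj : ∀ n, (starRingEnd ℂ) (μ n) * μ n = 1 := by
    intro n
    have habs : ‖μ n‖ = 1 := by
      rw [hμdef]
      rw [Complex.norm_exp]
      simp [Complex.mul_re]
    rw [← Complex.normSq_eq_conj_mul_self, Complex.normSq_eq_norm_sq, habs]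
    norm_num
  set e : ℕ → H := fun n => μ n • f n with hedef
  have hone : Orthonormal ℂ e := by
    rw [orthonormal_iff_ite]
    intro i j
    show (inner ℂ (μ i • f i) (μ j • f j) : ℂ) = _
    rw [inner_smul_left, inner_smul_right, hfite]
    rcases eq_or_ne i j with h | h
    · subst h
      simp [← mul_assoc, hμconj i]
    · simp [h]
  have hJe : ∀ n, J (e n) = e n := by
    intro n
    show J (μ n • f n) = μ n • f n
    rw [hsmul, hJf n, smul_smul]
    congr 1
    rw [← hμsq n, ← mul_assoc, hμconj, one_mul]
  have heK : ∀ n, e n ∈ K n := by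
    intro n
    exact Submodule.smul_mem _ _ (hfK n)
  have heorth : ∀ {m n : ℕ}, m < n → ∀ x ∈ K m, (inner ℂ (e n) x : ℂ) = 0 := by
    intro m n hmn x hx
    show (inner ℂ (μ n • f n) x : ℂ) = 0
    rw [inner_smul_left, hforth hmn x hx, mul_zero]
  have hspan_e : Submodule.span ℂ (Set.range e) =
      Submodule.span ℂ (Set.range fun k : ℕ => (A ^ k) x₀) := by
    have h1 : Submodule.span ℂ (Set.range e) = Submodule.span ℂ (Set.range f) := by
      apply le_antisymm
      · rw [Submodule.span_le]
        rintro _ ⟨n, rfl⟩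
        exact Submodule.smul_mem _ _ (Submodule.subset_span ⟨n, rfl⟩)
      · rw [Submodule.span_le]
        rintro _ ⟨n, rfl⟩
        have : f n = (μ n)⁻¹ • e n := by
          rw [hedef]
          rw [smul_smul, inv_mul_cancel₀ (hμ0 n), one_smul]
        rw [this]
        exact Submodule.smul_mem _ _ (Submodule.subset_span ⟨n, rfl⟩)
    rw [h1, hfdef, span_gramSchmidtNormed_range, span_gramSchmidt]
  have hdense : ⊤ ≤ (Submodule.span ℂ (Set.range e)).topologicalClosure := by
    rw [hspan_e]
    intro x _
    exact hcyc x
  -- the antisymmetry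
  have hanti : ∀ k l : ℕ, (inner ℂ (e l) (A (e k)) : ℂ) = - inner ℂ (e k) (A (e l)) := by
    intro k l
    have h1 : (inner ℂ (J (A (e k))) (J (e l)) : ℂ) = inner ℂ (e l) (A (e k)) := hip _ _
    rw [hJA (e k), hJe k, hJe l] at h1
    rw [← h1, inner_neg_left, ContinuousLinearMap.adjoint_inner_left]
  have htri : ∀ k l : ℕ, l + 1 < k → (inner ℂ (e k) (A (e l)) : ℂ) = 0 := by
    intro k l hlk
    exact heorth hlk _ (hAK _ (heK l))
  -- nonvanishing of the subdiagonal
  have hIio : ∀ k : ℕ, Set.Iio (k + 1) = Set.Iic k := by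
    intro k; ext j; simp [Nat.lt_succ_iff]
  have hgvK : ∀ k, v k - g k ∈ Submodule.span ℂ (v '' Set.Iio k) := by
    intro k
    rw [← span_gramSchmidt_Iio ℂ v k]
    have hdefk := gramSchmidt_def' ℂ v k
    have heq : v k - g k = ∑ i ∈ Finset.Iio k,
        (ℂ ∙ g i).starProjection (v k) := by
      nth_rewrite 1 [hdefk]
      simp [hgdef]
    rw [heq]
    refine Submodule.sum_mem _ fun i hi => ?_
    have hgmem : g i ∈ Submodule.span ℂ (g '' Set.Iio k) :=
      Submodule.subset_span ⟨i, Finset.mem_Iio.mp hi, rfl⟩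
    exact (Submodule.span_singleton_le_iff_mem _ _).mpr hgmem (Submodule.starProjection_apply_mem _ _)
  have hAIio : ∀ (k : ℕ) (x : H), x ∈ Submodule.span ℂ (v '' Set.Iio (k + 1)) → A x ∈ K (k + 1) := by
    intro k x hx
    rw [hIio k] at hx
    exact hAK x hx
  have hsub : ∀ k, (inner ℂ (e (k + 1)) (A (e k)) : ℂ) ≠ 0 := by
    intro k
    have hAg : (inner ℂ (f (k + 1)) (A (g k)) : ℂ) = (‖g (k + 1)‖ : ℂ) := by
      have h1 : A (g k) = v (k + 1) - A (v k - g k) := by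
        rw [map_sub, hvs k]
        abel
      rw [h1, inner_sub_right]
      have h2' : ∀ x ∈ Submodule.span ℂ (v '' Set.Iio k), A x ∈ K k := by
        intro x hx
        induction hx using Submodule.span_induction with
        | mem y hy =>
          obtain ⟨i, hi, rfl⟩ := hy
          rw [← hvs i]
          exact hvK (Set.mem_Iio.mp hi)
        | zero => simp only [map_zero]; exact Submodule.zero_mem _
        | add y z _ _ hy hz => rw [map_add]; exact Submodule.add_mem _ hy hz
        | smul a y _ hy => rw [map_smul]; exact Submodule.smul_mem _ _ hy
      have h2 : (inner ℂ (f (k + 1)) (A (v k - g k)) : ℂ) = 0 :=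
        hforth (Nat.lt_succ_self k) _ (h2' _ (hgvK k))
      rw [h2, sub_zero]
      have h3 : v (k + 1) = g (k + 1) + (v (k + 1) - g (k + 1)) := by abel
      rw [h3, inner_add_right]
      have h4 : (inner ℂ (f (k + 1)) (v (k + 1) - g (k + 1)) : ℂ) = 0 := by
        refine hforth (Nat.lt_succ_self k) _ ?_
        have hmem := hgvK (k + 1)
        rw [hIio k] at hmem
        exact hmem
      rw [h4, add_zero]
      rw [hfg (k + 1), inner_smul_left]
      rw [inner_self_eq_norm_sq_to_K]
      have hne : (‖g (k + 1)‖ : ℂ) ≠ 0 := by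
        simpa using hg0 (k + 1)
      rw [map_inv₀, Complex.conj_ofReal]
      field_simp
      rfl
    have hfAf : (inner ℂ (f (k + 1)) (A (f k)) : ℂ) ≠ 0 := by
      rw [hfg k, map_smul, inner_smul_right, hAg]
      have hne : (‖g k‖ : ℂ) ≠ 0 := by simpa using hg0 k
      have hne' : (‖g (k + 1)‖ : ℂ) ≠ 0 := by simpa using hg0 (k + 1)
      exact mul_ne_zero (inv_ne_zero hne) hne'
    show (inner ℂ (μ (k + 1) • f (k + 1)) (A (μ k • f k)) : ℂ) ≠ 0
    rw [map_smul, inner_smul_left, inner_smul_right]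
    exact mul_ne_zero (by simpa using hμ0 (k + 1)) (mul_ne_zero (hμ0 k) hfAf)
  -- assemble
  refine ⟨HilbertBasis.mk hone hdense, ?_, ?_, ?_⟩
  · intro k l hkl
    have hb : ∀ n, (HilbertBasis.mk hone hdense) n = e n :=
      fun n => congrFun (HilbertBasis.coe_mk hone hdense) n
    show (inner ℂ ((HilbertBasis.mk hone hdense) k) (A ((HilbertBasis.mk hone hdense) l)) : ℂ) = 0
    rw [hb k, hb l]
    rcases lt_or_ge (l + 1) k with h | h
    · exact htri k l h
    · have h2 := lt_abs.mp hkl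
      have h' : k + 1 < l := by omega
      rw [hanti l k, htri l k h', neg_zero]
  · intro k l
    have hb : ∀ n, (HilbertBasis.mk hone hdense) n = e n :=
      fun n => congrFun (HilbertBasis.coe_mk hone hdense) n
    show (inner ℂ ((HilbertBasis.mk hone hdense) k) (A ((HilbertBasis.mk hone hdense) l)) : ℂ)
      = - inner ℂ ((HilbertBasis.mk hone hdense) l) (A ((HilbertBasis.mk hone hdense) k))
    rw [hb k, hb l]
    rw [hanti l k]
  · intro k
    have hb : ∀ n, (HilbertBasis.mk hone hdense) n = e n :=
      fun n => congrFun (HilbertBasis.coe_mk hone hdense) n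
    show (inner ℂ ((HilbertBasis.mk hone hdense) k) (A ((HilbertBasis.mk hone hdense) (k + 1))) : ℂ) ≠ 0
    rw [hb k, hb (k + 1)]
    rw [hanti (k + 1) k]
    exact neg_ne_zero.mpr (hsub k)
end
end

section
/- Let A be a bounded linear operator on a complex Hilbert space H with a cyclic vector x₀, and let J be a conjugation on H such that J(Σ_k α_k Aᵏx₀) = Σ_k (−1)ᵏ conj(α_k) (A*)ᵏx₀ for every finite linear combination Σ_k α_k Aᵏx₀ (α_k ∈ ℂ, all but finitely many zero). Then JA = −A*J, i.e. JAJ = −A*, and Jx₀ = x₀; in particular A is complex skew-symmetric. -/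
open scoped ComplexConjugate

noncomputable section

variable {H : Type*} [NormedAddCommGroup H] [InnerProductSpace ℂ H]

/-- If `J` is a conjugation satisfying
`J(Σ α_k Aᵏx₀) = Σ (−1)ᵏ conj(α_k) (A*)ᵏx₀` on finite linear combinations from the
orbit of a cyclic vector `x₀`, then `JA = −A*J`, `JAJ = −A*`, `Jx₀ = x₀`, and in
particular `A` is complex skew-symmetric. -/
theorem statement5 {H : Type*} [NormedAddCommGroup H] [InnerProductSpace ℂ H]
    [CompleteSpace H]
    (A : H →L[ℂ] H) (x₀ : H) (hcyc : IsCyclicVector A x₀)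
    (J : H → H) (hJ : IsConjugation J)
    (hL : ∀ α : ℕ →₀ ℂ,
      J (α.sum fun k c => c • (A ^ k) x₀) =
        α.sum fun k c => ((-1 : ℂ) ^ k * conj c) • (ContinuousLinearMap.adjoint A ^ k) x₀) :
    (∀ x : H, J (A x) = - ContinuousLinearMap.adjoint A (J x)) ∧
    (∀ x : H, J (A (J x)) = - ContinuousLinearMap.adjoint A x) ∧
    J x₀ = x₀ ∧
    (∃ J' : H → H, IsConjugation J' ∧
      ∀ x : H, J' (A (J' x)) = - ContinuousLinearMap.adjoint A x) := by
  obtain ⟨hadd, hsmul, hinv, hip⟩ := hJ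
  -- J preserves norms
  have hnorm : ∀ z : H, ‖J z‖ = ‖z‖ := by
    intro z
    rw [norm_eq_sqrt_re_inner (𝕜 := ℂ) (J z), norm_eq_sqrt_re_inner (𝕜 := ℂ) z, hip z z]
  have hJ0 : J 0 = 0 := by
    have := hsmul 0 0
    simpa using this
  have hsub : ∀ x y : H, J (x - y) = J x - J y := by
    intro x y
    have := hadd (x - y) y
    rw [sub_add_cancel] at this
    rw [eq_sub_of_add_eq this.symm]
  have hJc : Continuous J := by
    have : Isometry J := Isometry.of_dist_eq (fun x y => by
      rw [dist_eq_norm, dist_eq_norm, ← hsub, hnorm])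
    exact this.continuous
  -- main identity on the dense span
  have key : ∀ x : H, J (A x) = - ContinuousLinearMap.adjoint A (J x) := by
    set B := ContinuousLinearMap.adjoint A with hB
    have hEq : Set.EqOn (fun x => J (A x)) (fun x => -(B (J x)))
        ((Submodule.span ℂ (Set.range fun k : ℕ => (A ^ k) x₀) : Submodule ℂ H) : Set H) := by
      intro x hx
      rw [SetLike.mem_coe, Finsupp.mem_span_range_iff_exists_finsupp] at hx
      obtain ⟨α, rfl⟩ := hx
      simp only
      have hAx : A (α.sum fun k c => c • (A ^ k) x₀) =
          (α.embDomain ⟨Nat.succ, Nat.succ_injective⟩).sum fun k c => c • (A ^ k) x₀ := by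
        rw [map_finsuppSum, Finsupp.sum_embDomain]
        refine Finsupp.sum_congr fun k _ => ?_
        rw [map_smul]
        congr 1
        show A ((A ^ k) x₀) = (A ^ (k + 1)) x₀
        rw [pow_succ' A k, ContinuousLinearMap.mul_apply]
      have hneg : ∀ y : H, -B y = (-B) y := fun y => (ContinuousLinearMap.neg_apply B y).symm
      rw [hAx, hL, hL, Finsupp.sum_embDomain, hneg, map_finsuppSum]
      refine Finsupp.sum_congr fun k _ => ?_
      rw [ContinuousLinearMap.neg_apply, map_smul, ← neg_smul]
      show ((-1 : ℂ) ^ (k + 1) * conj (α k)) • (B ^ (k + 1)) x₀ = _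
      rw [pow_succ' B k, ContinuousLinearMap.mul_apply]
      congr 1
      ring
    have hfc : Continuous fun x => J (A x) := hJc.comp A.continuous
    have hgc : Continuous fun x => -(B (J x)) := (B.continuous.comp hJc).neg
    have heq2 := Continuous.ext_on hcyc hfc hgc hEq
    intro x
    exact congrFun heq2 x
  have hJx₀ : J x₀ = x₀ := by
    have := hL (Finsupp.single 0 1)
    rw [Finsupp.sum_single_index (by simp), Finsupp.sum_single_index (by simp)] at this
    simpa using this
  refine ⟨key, ?_, hJx₀, ?_⟩
  · intro x
    rw [key (J x), hinv]
  · exact ⟨J, ⟨hadd, hsmul, hinv, hip⟩, fun x => by rw [key (J x), hinv]⟩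
end
end

section
/- Let H be an infinite-dimensional separable complex Hilbert space and let A be a unitary operator on H. Then A does not belong to the class C₊(H); i.e., there is no orthonormal basis of H in which the matrix of A belongs to M₃⁺. -/
open scoped ComplexConjugate

noncomputable section

variable {H : Type*} [NormedAddCommGroup H] [InnerProductSpace ℂ H]

/-- No unitary operator on an infinite-dimensional separable complex
Hilbert space belongs to the class `C₊(H)`. -/
theorem statement7 {H : Type*} [NormedAddCommGroup H] [InnerProductSpace ℂ H]
    [CompleteSpace H] [TopologicalSpace.SeparableSpace H]
    (hinf : ¬ FiniteDimensional ℂ H)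
    (A : H →L[ℂ] H)
    (hA : ContinuousLinearMap.adjoint A ∘L A = 1 ∧ A ∘L ContinuousLinearMap.adjoint A = 1) :
    ¬ MemCplus A := by
  rintro ⟨e, h0, hsym, hoff⟩
  set m := matrixIn A e with hm
  -- The inner product ⟪A e₀, A e₂⟫ equals ⟪e₀, e₂⟫ = 0 by unitarity.
  have key0 : (inner ℂ (A (e 0)) (A (e 2)) : ℂ) = 0 := by
    have h1 : (ContinuousLinearMap.adjoint A) (A (e 0)) = e 0 := by
      have := congrArg (fun T : H →L[ℂ] H => T (e 0)) hA.1
      simpa using this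
    calc (inner ℂ (A (e 0)) (A (e 2)) : ℂ)
        = inner ℂ ((ContinuousLinearMap.adjoint A) (A (e 0))) (e 2) :=
          (ContinuousLinearMap.adjoint_inner_left A (e 2) (A (e 0))).symm
      _ = inner ℂ (e 0) (e 2) := by rw [h1]
      _ = 0 := e.orthonormal.2 (by decide)
  -- Expand via Parseval: only the k = 1 term survives.
  have key1 : (inner ℂ (A (e 0)) (A (e 2)) : ℂ) = conj (m 1 0) * m 1 2 := by
    rw [← e.tsum_inner_mul_inner (A (e 0)) (A (e 2))]
    have : ∀ k : ℕ, (inner ℂ (A (e 0)) (e k) : ℂ) * inner ℂ (e k) (A (e 2))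
        = conj (m k 0) * m k 2 := by
      intro k
      beta_reduce
      rw [← inner_conj_symm]
      rfl
    rw [tsum_eq_single 1 ?_]
    · exact this 1
    · intro k hk
      rw [this k]
      rcases Nat.lt_or_ge k 2 with h | h
      · interval_cases k
        · have : m 0 2 = 0 := h0 0 2 (by decide)
          simp [this]
        · exact absurd rfl hk
      · have : m k 0 = 0 := by
          refine h0 k 0 ?_
          rw [Nat.cast_zero, sub_zero, abs_of_nonneg (Int.natCast_nonneg k)]
          omega
        simp [this]
  have hne : conj (m 1 0) * m 1 2 ≠ 0 := by
    refine mul_ne_zero ?_ (hoff 1)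
    rw [hsym 1 0]
    simpa using hoff 0
  exact hne (key1 ▸ key0)
end
end

section
/- Let A be a unitary operator on an infinite-dimensional separable complex Hilbert space H, and let (e_k)_{k≥0} be an orthonormal basis of H such that (Ae_l, e_k) = 0 whenever |k−l| > 1. Then (Ae₁, e₀) · conj((Ae₁, e₂)) = 0; i.e., at least one of the off-diagonal entries m_{0,1} = (Ae₁, e₀) and m_{2,1} = (Ae₁, e₂) vanishes. -/
open scoped ComplexConjugate

noncomputable section

variable {H : Type*} [NormedAddCommGroup H] [InnerProductSpace ℂ H]

/-- If a unitary operator `A` has a tridiagonal matrix in an orthonormal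
basis `(e_k)`, then `(Ae₁, e₀) · conj((Ae₁, e₂)) = 0` (paper's inner product is linear in
the first argument, so `(Ae₁, e₀) = ⟪e₀, Ae₁⟫` in Mathlib's convention). -/
theorem statement8 {H : Type*} [NormedAddCommGroup H] [InnerProductSpace ℂ H]
    [CompleteSpace H] [TopologicalSpace.SeparableSpace H]
    (hinf : ¬ FiniteDimensional ℂ H)
    (A : H →L[ℂ] H)
    (hA : ContinuousLinearMap.adjoint A ∘L A = 1 ∧ A ∘L ContinuousLinearMap.adjoint A = 1)
    (e : HilbertBasis ℕ ℂ H)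
    (htri : ∀ k l : ℕ, 1 < |(k : ℤ) - (l : ℤ)| → (inner ℂ (e k) (A (e l)) : ℂ) = 0) :
    (inner ℂ (e 0) (A (e 1)) : ℂ) * conj ((inner ℂ (e 2) (A (e 1)) : ℂ)) = 0 := by
  set B := ContinuousLinearMap.adjoint A with hB
  have hsum : HasSum (fun k : ℕ => (inner ℂ (B (e 0)) (e k) : ℂ) * inner ℂ (e k) (B (e 2)))
      (inner ℂ (B (e 0)) (B (e 2))) := e.hasSum_inner_mul_inner _ _
  have hzero : ∀ k : ℕ, k ≠ 1 →
      (inner ℂ (B (e 0)) (e k) : ℂ) * inner ℂ (e k) (B (e 2)) = 0 := by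
    intro k hk
    rcases Nat.lt_or_ge k 2 with h2 | h2
    · interval_cases k
      · have : (inner ℂ (e 2) (A (e 0)) : ℂ) = 0 := htri 2 0 (by norm_num)
        have h' : (inner ℂ (e 0) (B (e 2)) : ℂ) = 0 := by
          rw [hB, ContinuousLinearMap.adjoint_inner_right, ← inner_conj_symm, this, map_zero]
        rw [h', mul_zero]
      · exact absurd rfl hk
    · have : (inner ℂ (e 0) (A (e k)) : ℂ) = 0 := by
        apply htri
        rw [Nat.cast_zero, zero_sub, abs_neg, Nat.abs_cast]
        exact_mod_cast h2
      have h' : (inner ℂ (B (e 0)) (e k) : ℂ) = 0 := by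
        rw [hB, ContinuousLinearMap.adjoint_inner_left, this]
      rw [h', zero_mul]
  have hsingle : HasSum (fun k : ℕ => (inner ℂ (B (e 0)) (e k) : ℂ) * inner ℂ (e k) (B (e 2)))
      ((inner ℂ (B (e 0)) (e 1) : ℂ) * inner ℂ (e 1) (B (e 2))) := hasSum_single 1 hzero
  have hval : (inner ℂ (B (e 0)) (e 1) : ℂ) * inner ℂ (e 1) (B (e 2))
      = (inner ℂ (B (e 0)) (B (e 2)) : ℂ) := hsingle.unique hsum
  have hrhs : (inner ℂ (B (e 0)) (B (e 2)) : ℂ) = 0 := by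
    rw [hB, ContinuousLinearMap.adjoint_inner_left]
    have : A ((ContinuousLinearMap.adjoint A) (e 2)) = e 2 := by
      have := congrArg (fun T : H →L[ℂ] H => T (e 2)) hA.2
      simpa using this
    rw [this]
    have ho := e.orthonormal
    rw [orthonormal_iff_ite] at ho
    simpa using ho 0 2
  have h1 : (inner ℂ (B (e 0)) (e 1) : ℂ) = inner ℂ (e 0) (A (e 1)) := by
    rw [hB, ContinuousLinearMap.adjoint_inner_left]
  have h2 : (inner ℂ (e 1) (B (e 2)) : ℂ) = conj ((inner ℂ (e 2) (A (e 1)) : ℂ)) := by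
    rw [hB, ContinuousLinearMap.adjoint_inner_right, ← inner_conj_symm]
  rw [← h1, ← h2, hval, hrhs]
end
end

section
/- Let A be a bounded linear operator on a complex Hilbert space H, let J be a conjugation on H with JAJ = A*, and let (e_k)_{k≥0} be an orthonormal basis of H with Je_k = e_k and Ae_k ∈ span{e₀, …, e_{k+1}} for all k. Then the matrix of A is tridiagonal: (Ae_l, e_k) = 0 whenever |k − l| > 1. -/
open scoped ComplexConjugate

noncomputable section

variable {H : Type*} [NormedAddCommGroup H] [InnerProductSpace ℂ H]

/-- If `JAJ = A*` for a conjugation `J` fixing each vector of an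
orthonormal basis `(e_k)`, and `Ae_k ∈ span{e₀,…,e_{k+1}}` for all `k`, then the matrix
of `A` is tridiagonal: `(Ae_l, e_k) = 0` whenever `|k − l| > 1`. -/
theorem statement16 {H : Type*} [NormedAddCommGroup H] [InnerProductSpace ℂ H]
    [CompleteSpace H]
    (A : H →L[ℂ] H) (J : H → H) (hJ : IsConjugation J)
    (hJAJ : ∀ x : H, J (A (J x)) = ContinuousLinearMap.adjoint A x)
    (e : HilbertBasis ℕ ℂ H) (hfix : ∀ k : ℕ, J (e k) = e k)
    (hA : ∀ k : ℕ, A (e k) ∈ Submodule.span ℂ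
      (Set.range fun j : Fin (k + 2) => e (j : ℕ))) :
    ∀ k l : ℕ, 1 < |(k : ℤ) - (l : ℤ)| → (inner ℂ (e k) (A (e l)) : ℂ) = 0 := by
  intro k l hkl
  have aux : ∀ m n : ℕ, n + 1 < m → (inner ℂ (e m) (A (e n)) : ℂ) = 0 := by
    intro m n hmn
    have hker : Submodule.span ℂ (Set.range fun j : Fin (n + 2) => e (j : ℕ)) ≤
        LinearMap.ker (innerSL ℂ (e m)).toLinearMap := by
      rw [Submodule.span_le]
      rintro _ ⟨j, rfl⟩
      have hne : m ≠ (j : ℕ) := by omega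
      simpa using e.orthonormal.2 hne
    have := hker (hA n)
    simpa using this
  rcases lt_abs.mp hkl with h' | h'
  · exact aux k l (by omega)
  · have hk : k + 1 < l := by omega
    have h1 : (inner ℂ (e k) (A (e l)) : ℂ) = inner ℂ (ContinuousLinearMap.adjoint A (e k)) (e l) :=
      (ContinuousLinearMap.adjoint_inner_left A (e l) (e k)).symm
    rw [h1, ← hJAJ, hfix]
    have h2 : (inner ℂ (J (A (e k))) (e l) : ℂ) = inner ℂ (J (A (e k))) (J (e l)) := by
      rw [hfix]
    rw [h2, hJ.2.2.2]
    exact aux l k hk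
end
end
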